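/- arXiv:2308.09797 — 15 statements merged into one kernel-verified Lean document; each statement's English description precedes it below -/
import Mathlib

section
/- For every z : S → ℝ≥0 with ∑_{e∈S} z(e) > q, there exists a unique real number r ≥ 0 such that ∑_{e∈S} min(r, z(e)) = q (the cutting height of z). -/
open scoped NNReal

/-- For every `z : S → ℝ≥0` with `∑ e, z e > q`, there exists a unique
`r ≥ 0` (in `ℝ≥0`) such that `∑ e, min r (z e) = q` (the cutting height of `z`). -/
theorem cutting_height_exists_unique {S : Type*} [Fintype S] (q : ℝ≥0) (z : S → ℝ≥0)
    (h : q < ∑ e, z e) :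
    ∃! r : ℝ≥0, (∑ e, min r (z e)) = q := by
  set f : ℝ≥0 → ℝ≥0 := fun r => ∑ e, min r (z e) with hf
  have hcont : Continuous f := by
    apply continuous_finset_sum
    intro e _
    exact continuous_id.min continuous_const
  set b : ℝ≥0 := ∑ e, z e with hb
  have hf0 : f 0 = 0 := by simp [hf]
  have hfb : f b = b := by
    have : ∀ e, min b (z e) = z e := fun e =>
      min_eq_right (Finset.single_le_sum (fun i _ => (zero_le : 0 ≤ z i)) (Finset.mem_univ e))
    simp [hf, this]
    exact hb.symm
  -- existence via IVT
  have hmem : q ∈ Set.Icc (f 0) (f b) := by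
    rw [hf0, hfb]
    exact ⟨(zero_le : 0 ≤ q), h.le⟩
  obtain ⟨r, -, hr⟩ := intermediate_value_Icc (zero_le : 0 ≤ b) hcont.continuousOn hmem
  refine ⟨r, hr, ?_⟩
  -- uniqueness
  have key : ∀ r₁ r₂ : ℝ≥0, f r₁ = q → f r₂ = q → r₁ < r₂ → False := by
    intro r₁ r₂ h1 h2 hlt
    -- some e with r₁ < z e, else f r₁ = ∑ z > q
    have : ∃ e : S, r₁ < z e := by
      by_contra hc
      push_neg at hc
      have : f r₁ = b := by
        simp only [hf]
        exact Finset.sum_congr rfl fun e _ => min_eq_right (hc e)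
      rw [h1] at this
      exact absurd this.symm h.ne'
    obtain ⟨e, he⟩ := this
    have hstrict : f r₁ < f r₂ := by
      apply Finset.sum_lt_sum
      · intro i _
        exact min_le_min hlt.le le_rfl
      · exact ⟨e, Finset.mem_univ e, by
          rw [min_eq_left he.le]
          exact lt_min hlt he⟩
    rw [h1, h2] at hstrict
    exact lt_irrefl q hstrict
  intro r' hr'
  rcases lt_trichotomy r' r with hlt | heq | hgt
  · exact absurd (key r' r hr' hr hlt) not_false
  · exact heq
  · exact absurd (key r r' hr hr' hgt) not_false
end

section
/- The diversifying choice function is consistent: for all z, z' : S → ℝ≥0, if C(z) ≤ z' ≤ z pointwise, then C(z') = C(z). -/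
open scoped NNReal

/-- `IsDivChoice q z w` asserts that `w = C(z)`, where `C` is the diversifying choice
function with quota `q` on coordinates indexed by the finite set `S`:
if `|z| = ∑ e, z e ≤ q` then `C(z) = z`, and otherwise `C(z) e = min r (z e)` for all `e`,
where `r ≥ 0` is the (unique) cutting height satisfying `∑ e, min r (z e) = q`. -/
def IsDivChoice {S : Type*} [Fintype S] (q : ℝ≥0) (z w : S → ℝ≥0) : Prop :=
  ((∑ e, z e) ≤ q ∧ w = z) ∨
    (q < ∑ e, z e ∧ ∃ r : ℝ≥0, (∑ e, min r (z e)) = q ∧ w = fun e => min r (z e))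

lemma sum_eq_of_le_of_sum_le {S : Type*} [Fintype S] {f g : S → ℝ≥0}
    (hle : ∀ e, f e ≤ g e) (hsum : ∑ e, g e ≤ ∑ e, f e) : ∀ e, f e = g e := by
  have := (Finset.sum_eq_sum_iff_of_le (fun i _ => hle i)).mp
    (le_antisymm hsum (Finset.sum_le_sum fun i _ => hle i)).symm
  exact fun e => this e (Finset.mem_univ e)

/-- The diversifying choice function is consistent: if
`C(z) ≤ z' ≤ z` pointwise, then `C(z') = C(z)`. -/
theorem divChoice_consistent {S : Type*} [Fintype S] (q : ℝ≥0) (z z' cz cz' : S → ℝ≥0)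
    (hz : IsDivChoice q z cz) (hz' : IsDivChoice q z' cz')
    (h1 : ∀ e, cz e ≤ z' e) (h2 : ∀ e, z' e ≤ z e) :
    cz' = cz := by
  rcases hz with ⟨hle, hcz⟩ | ⟨hlt, r, hr, hcz⟩
  · have hz'z : z' = z := funext fun e => le_antisymm (h2 e) (by rw [hcz] at h1; exact h1 e)
    rcases hz' with ⟨_, hcz'⟩ | ⟨hlt', _⟩
    · rw [hcz', hcz, hz'z]
    · rw [hz'z] at hlt'
      exact absurd hle (not_le.mpr hlt')
  · have h1' : ∀ e, min r (z e) ≤ z' e := fun e => by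
      have := h1 e; rw [hcz] at this; exact this
    have key : ∀ e, min r (z' e) = min r (z e) := by
      intro e
      rcases le_or_gt (z e) r with h | h
      · have hz'e : z' e = z e := by
          have := h1' e
          rw [min_eq_right h] at this
          exact le_antisymm (h2 e) this
        rw [hz'e]
      · have hrz' : r ≤ z' e := by
          have := h1' e
          rwa [min_eq_left h.le] at this
        rw [min_eq_left h.le, min_eq_left hrz']
    have hsum' : (∑ e, min r (z' e)) = q := by
      rw [Finset.sum_congr rfl fun e _ => key e]; exact hr
    rcases hz' with ⟨hle', hcz'⟩ | ⟨hlt', r', hr', hcz'⟩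
    · have heq : ∀ e, min r (z' e) = z' e :=
        sum_eq_of_le_of_sum_le (f := fun e => min r (z' e)) (fun e => min_le_right _ _)
          (hle'.trans hsum'.symm.le)
      rw [hcz', hcz]
      funext e
      rw [← heq e, key e]
    · rw [hcz', hcz]
      funext e
      show min r' (z' e) = min r (z e)
      rw [← key e]
      rcases le_total r r' with h | h
      · exact (sum_eq_of_le_of_sum_le (f := fun e => min r (z' e))
          (g := fun e => min r' (z' e))
          (fun e => min_le_min h le_rfl) (by rw [hr', hsum']) e).symm
      · exact sum_eq_of_le_of_sum_le (f := fun e => min r' (z' e))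
          (g := fun e => min r (z' e))
          (fun e => min_le_min h le_rfl) (by rw [hr', hsum']) e
end

section
/- The diversifying choice function is persistent: for all z, z' : S → ℝ≥0, if z' ≤ z pointwise, then C(z) ∧ z' ≤ C(z') pointwise, where ∧ denotes the pointwise minimum. -/
open scoped NNReal

/-- The diversifying choice function is persistent: if `z' ≤ z`
pointwise, then `C(z) ∧ z' ≤ C(z')` pointwise (where `∧` is the pointwise minimum). -/
theorem divChoice_persistent {S : Type*} [Fintype S] (q : ℝ≥0) (z z' cz cz' : S → ℝ≥0)
    (h : ∀ e, z' e ≤ z e) (hz : IsDivChoice q z cz) (hz' : IsDivChoice q z' cz') :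
    ∀ e, min (cz e) (z' e) ≤ cz' e := by
  intro e
  rcases hz' with ⟨hq', hw'⟩ | ⟨hq', r', hr', hw'⟩
  · rw [hw']; exact min_le_right _ _
  · rcases hz with ⟨hq, hw⟩ | ⟨hq, r, hr, hw⟩
    · exact absurd hq (not_le.mpr (hq'.trans_le (Finset.sum_le_sum fun i _ => h i)))
    · subst hw hw'
      simp only
      rcases le_or_gt r r' with hrr | hrr
      · calc min (min r (z e)) (z' e) ≤ min r (z' e) :=
              le_min ((min_le_left _ _).trans (min_le_left _ _)) (min_le_right _ _)
          _ ≤ min r' (z' e) := min_le_min hrr le_rfl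
      · -- r' < r : sums force pointwise equality of min r (z' ·) and min r' (z' ·)
        have hle : ∀ i ∈ Finset.univ, min r' (z' i) ≤ min r (z' i) :=
          fun i _ => min_le_min hrr.le le_rfl
        have hsum : ∑ i, min r (z' i) ≤ ∑ i, min r' (z' i) := by
          rw [hr']
          rw [← hr]
          exact Finset.sum_le_sum fun i _ => min_le_min le_rfl (h i)
        have heq : ∀ i ∈ Finset.univ, min r' (z' i) = min r (z' i) :=
          (Finset.sum_eq_sum_iff_of_le hle).mp (le_antisymm (Finset.sum_le_sum hle) hsum)
        calc min (min r (z e)) (z' e) ≤ min r (z' e) :=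
              le_min ((min_le_left _ _).trans (min_le_left _ _)) (min_le_right _ _)
          _ = min r' (z' e) := (heq e (Finset.mem_univ e)).symm
end

section
/- The diversifying choice function is stationary: for all z, z' : S → ℝ≥0 one has C(z ∨ z') = C(C(z) ∨ z'), where ∨ denotes the pointwise maximum; in particular C is idempotent: C(C(z)) = C(z) for all z. -/
open scoped NNReal

private lemma sum_eq_pointwise {S : Type*} [Fintype S] {f g : S → ℝ≥0}
    (hle : ∀ e, f e ≤ g e) (hsum : (∑ e, f e) = ∑ e, g e) : ∀ e, f e = g e := by
  intro e
  exact (Finset.sum_eq_sum_iff_of_le (fun i _ => hle i)).mp hsum e (Finset.mem_univ e)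

private lemma cut_eq {S : Type*} [Fintype S] {z : S → ℝ≥0} {r r' : ℝ≥0}
    (hsum : (∑ e, min r (z e)) = ∑ e, min r' (z e)) :
    (fun e => min r (z e)) = fun e => min r' (z e) := by
  rcases le_total r r' with h | h
  · funext e
    exact sum_eq_pointwise (fun e => min_le_min h le_rfl) hsum e
  · funext e
    exact (sum_eq_pointwise (fun e => min_le_min h le_rfl) hsum.symm e).symm

private lemma divChoice_unique {S : Type*} [Fintype S] {q : ℝ≥0} {z w w' : S → ℝ≥0}
    (h : IsDivChoice q z w) (h' : IsDivChoice q z w') : w = w' := by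
  rcases h with ⟨hs, rfl⟩ | ⟨hs, r, hr, rfl⟩
  · rcases h' with ⟨_, rfl⟩ | ⟨hs', _, _, _⟩
    · rfl
    · exact absurd hs' (not_lt.mpr hs)
  · rcases h' with ⟨hs', rfl⟩ | ⟨_, r', hr', rfl⟩
    · exact absurd hs (not_lt.mpr hs')
    · exact cut_eq (hr.trans hr'.symm)

/-- The diversifying choice function is stationary:
`C(z ∨ z') = C(C(z) ∨ z')` for all `z, z'` (where `∨` is the pointwise maximum);
in particular `C` is idempotent: `C(C(z)) = C(z)`. -/
theorem divChoice_stationary {S : Type*} [Fintype S] (q : ℝ≥0) :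
    (∀ z z' w₁ cz w₂ : S → ℝ≥0,
      IsDivChoice q (fun e => max (z e) (z' e)) w₁ → IsDivChoice q z cz →
      IsDivChoice q (fun e => max (cz e) (z' e)) w₂ → w₁ = w₂) ∧
    (∀ z cz ccz : S → ℝ≥0, IsDivChoice q z cz → IsDivChoice q cz ccz → ccz = cz) := by
  constructor
  · intro z z' w₁ cz w₂ h1 hz h2
    rcases hz with ⟨hs, rfl⟩ | ⟨hs, r, hr, rfl⟩
    · exact divChoice_unique h1 h2
    · -- cz = fun e => min r (z e)
      set cz : S → ℝ≥0 := fun e => min r (z e) with hcz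
      have hczle : ∀ e, cz e ≤ r := fun e => min_le_left _ _
      have hczz : ∀ e, cz e ≤ z e := fun e => min_le_right _ _
      have hsumcz : (∑ e, cz e) = q := hr
      -- show IsDivChoice q (z ∨ z') w₂, then apply uniqueness
      have hXlow : q ≤ ∑ e, max (cz e) (z' e) := by
        rw [← hsumcz]
        exact Finset.sum_le_sum fun e _ => le_max_left _ _
      have hzlow : q < ∑ e, max (z e) (z' e) :=
        lt_of_lt_of_le hs (Finset.sum_le_sum fun e _ => le_max_left _ _)
      apply divChoice_unique h1
      rcases h2 with ⟨hs2, rfl⟩ | ⟨hs2, r₂, hr2, rfl⟩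
      · -- ∑ (cz ∨ z') ≤ q, so z' ≤ cz pointwise and everything collapses
        have heq : ∀ e, cz e = max (cz e) (z' e) :=
          sum_eq_pointwise (fun e => le_max_left _ _) (hsumcz.trans (le_antisymm hs2 hXlow).symm)
        have hz'le : ∀ e, z' e ≤ cz e := fun e =>
          (le_max_right (cz e) (z' e)).trans (heq e).ge
        have hmax : ∀ e, max (z e) (z' e) = z e := fun e =>
          max_eq_left ((hz'le e).trans (hczz e))
        refine Or.inr ⟨by simpa [hmax] using hs, r, ?_, ?_⟩
        · simpa [hmax] using hr
        · funext e
          show max (cz e) (z' e) = min r (max (z e) (z' e))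
          rw [← heq e, hmax e]
      · -- second cut with height r₂; set s = min r r₂
        set s := min r r₂ with hsdef
        have key : (fun e => min r₂ (max (cz e) (z' e))) = fun e => min s (max (z e) (z' e)) := by
          rcases le_total r₂ r with h | h
          · have hs2r : s = r₂ := min_eq_right h
            funext e
            show min r₂ (max (min r (z e)) (z' e)) = min s (max (z e) (z' e))
            rw [hs2r, min_max_distrib_left, min_max_distrib_left, ← min_assoc,
              min_eq_left h]
          · have hsr : s = r := min_eq_left h
            have hle2 : ∀ e, min r (max (cz e) (z' e)) ≤ min r₂ (max (cz e) (z' e)) :=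
              fun e => min_le_min h le_rfl
            have hge : q ≤ ∑ e, min r (max (cz e) (z' e)) := by
              rw [← hsumcz]
              refine Finset.sum_le_sum fun e _ => ?_
              exact le_min (hczle e) (le_max_left _ _)
            have hsumeq : (∑ e, min r (max (cz e) (z' e)))
                = ∑ e, min r₂ (max (cz e) (z' e)) :=
              le_antisymm (Finset.sum_le_sum fun e _ => hle2 e)
                (hr2.symm ▸ hge : (∑ e, min r₂ (max (cz e) (z' e))) ≤ _)
            have hpt := sum_eq_pointwise hle2 hsumeq
            funext e
            show min r₂ (max (cz e) (z' e)) = min s (max (z e) (z' e))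
            rw [← hpt e, hsr, min_max_distrib_left, min_max_distrib_left]
            congr 1
            show min r (min r (z e)) = min r (z e)
            rw [← min_assoc, min_self]
        rw [key]
        refine Or.inr ⟨hzlow, s, ?_, rfl⟩
        calc (∑ e, min s (max (z e) (z' e)))
            = ∑ e, min r₂ (max (cz e) (z' e)) := by rw [key]
          _ = q := hr2
  · intro z cz ccz hz h
    have hsum : (∑ e, cz e) ≤ q := by
      rcases hz with ⟨hs, rfl⟩ | ⟨hs, r, hr, rfl⟩
      · exact hs
      · exact le_of_eq hr
    rcases h with ⟨_, rfl⟩ | ⟨hs', _, _, _⟩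
    · rfl
    · exact absurd hs' (not_lt.mpr hsum)
end

section
/- The revealed preference relation of the diversifying choice function is transitive: for all rational x, y, w : S → ℝ≥0 (i.e. C(x) = x, C(y) = y, C(w) = w), if C(x ∨ y) = x and C(y ∨ w) = y, then C(x ∨ w) = x. -/
open scoped NNReal

lemma divChoice_rat_sum_le {S : Type*} [Fintype S] {q : ℝ≥0} {z : S → ℝ≥0}
    (h : IsDivChoice q z z) : (∑ e, z e) ≤ q := by
  rcases h with ⟨h1, _⟩ | ⟨h1, r, hr, hz⟩
  · exact h1
  · have : (∑ e, z e) = q := by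
      calc (∑ e, z e) = ∑ e, min r (z e) := by
            refine Finset.sum_congr rfl fun e _ => ?_
            exact congrFun hz e
        _ = q := hr
    exact this.le

lemma divChoice_char {S : Type*} [Fintype S] {q : ℝ≥0} {x y : S → ℝ≥0}
    (h : IsDivChoice q (fun e => max (x e) (y e)) x) :
    (∀ e, y e ≤ x e) ∨
      ((∑ e, x e) = q ∧ ∀ e, x e < y e → ∀ e', x e' ≤ x e) := by
  rcases h with ⟨h1, hx⟩ | ⟨h1, r, hr, hx⟩
  · left
    intro e
    have hxe : x e = max (x e) (y e) := congrFun hx e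
    exact hxe ▸ le_max_right _ _
  · right
    have hxe : ∀ e, x e = min r (max (x e) (y e)) := fun e => congrFun hx e
    have hler : ∀ e, x e ≤ r := fun e => (hxe e) ▸ min_le_left _ _
    constructor
    · calc (∑ e, x e) = ∑ e, min r (max (x e) (y e)) :=
            Finset.sum_congr rfl fun e _ => hxe e
        _ = q := hr
    · intro e he e'
      have h1 : x e = min r (y e) := by rw [hxe e, max_eq_right he.le]
      have hre : x e = r := by
        rcases le_total r (y e) with hm | hm
        · rw [h1, min_eq_left hm]
        · rw [h1, min_eq_right hm] at he
          exact absurd he (lt_irrefl _)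
      rw [hre]
      exact hler e'

lemma divChoice_back {S : Type*} [Fintype S] {q : ℝ≥0} {x w : S → ℝ≥0}
    (hsum : (∑ e, x e) = q)
    (hP : ∀ e, x e < w e → ∀ e', x e' ≤ x e) :
    IsDivChoice q (fun e => max (x e) (w e)) x := by
  by_cases hle : ∀ e, w e ≤ x e
  · left
    have hmax : ∀ e, max (x e) (w e) = x e := fun e => max_eq_left (hle e)
    constructor
    · calc (∑ e, max (x e) (w e)) = ∑ e, x e :=
            Finset.sum_congr rfl fun e _ => hmax e
        _ ≤ q := hsum.le
    · funext e
      exact (hmax e).symm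
  · push_neg at hle
    obtain ⟨e0, he0⟩ := hle
    have he0' : x e0 < w e0 := he0
    have hM : ∀ e', x e' ≤ x e0 := hP e0 he0'
    have key : ∀ e, min (x e0) (max (x e) (w e)) = x e := by
      intro e
      rcases le_or_gt (w e) (x e) with h | h
      · rw [max_eq_left h, min_eq_right (hM e)]
      · have hx_top : x e = x e0 := le_antisymm (hM e) (hP e h e0)
        rw [max_eq_right h.le, min_eq_left (hx_top ▸ h.le)]
        exact hx_top.symm
    right
    refine ⟨?_, x e0, ?_, ?_⟩
    · calc q = ∑ e, x e := hsum.symm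
        _ < ∑ e, max (x e) (w e) := by
            refine Finset.sum_lt_sum (fun e _ => le_max_left _ _)
              ⟨e0, Finset.mem_univ e0, lt_of_lt_of_le he0' (le_max_right _ _)⟩
    · calc (∑ e, min (x e0) (max (x e) (w e))) = ∑ e, x e :=
            Finset.sum_congr rfl fun e _ => key e
        _ = q := hsum
    · funext e
      exact (key e).symm

lemma eq_of_le_of_sum_le {S : Type*} [Fintype S] {x y : S → ℝ≥0}
    (h : ∀ e, y e ≤ x e) (hs : (∑ e, x e) ≤ ∑ e, y e) : x = y := by
  funext e
  by_contra hne
  have hlt : y e < x e := (h e).lt_of_ne fun h' => hne h'.symm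
  have : (∑ e, y e) < ∑ e, x e :=
    Finset.sum_lt_sum (fun i _ => h i) ⟨e, Finset.mem_univ e, hlt⟩
  exact absurd hs (not_le.mpr this)

/-- The revealed preference relation of the diversifying choice
function is transitive: for rational `x, y, w`, if `C(x ∨ y) = x` and `C(y ∨ w) = y`,
then `C(x ∨ w) = x`. -/
theorem divChoice_pref_trans {S : Type*} [Fintype S] (q : ℝ≥0) (x y w : S → ℝ≥0)
    (hx : IsDivChoice q x x) (hy : IsDivChoice q y y) (hw : IsDivChoice q w w)
    (hxy : IsDivChoice q (fun e => max (x e) (y e)) x)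
    (hyw : IsDivChoice q (fun e => max (y e) (w e)) y) :
    IsDivChoice q (fun e => max (x e) (w e)) x := by
  have hxq : (∑ e, x e) ≤ q := divChoice_rat_sum_le hx
  rcases divChoice_char hxy with hyx | ⟨hxsum, hP⟩
  · rcases divChoice_char hyw with hwy | ⟨hysum, hQ⟩
    · -- w ≤ y ≤ x
      left
      have hmax : ∀ e, max (x e) (w e) = x e :=
        fun e => max_eq_left ((hwy e).trans (hyx e))
      constructor
      · calc (∑ e, max (x e) (w e)) = ∑ e, x e :=
              Finset.sum_congr rfl fun e _ => hmax e
          _ ≤ q := hxq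
      · funext e
        exact (hmax e).symm
    · -- ∑ y = q, y ≤ x, ∑ x ≤ q  ⇒ x = y
      have hxy' : x = y := eq_of_le_of_sum_le hyx (by rw [hysum]; exact hxq)
      subst hxy'
      exact hyw
  · rcases divChoice_char hyw with hwy | ⟨hysum, hQ⟩
    · -- w ≤ y
      refine divChoice_back hxsum fun e he => ?_
      exact hP e (lt_of_lt_of_le he (hwy e))
    · by_cases hle : ∀ e, y e ≤ x e
      · have hxy' : x = y := eq_of_le_of_sum_le hle (by rw [hysum]; exact hxq)
        subst hxy'
        exact hyw
      · push_neg at hle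
        obtain ⟨e1, he1⟩ := hle
        refine divChoice_back hxsum fun e he e' => ?_
        rcases le_or_gt (w e) (y e) with h | h
        · exact hP e (lt_of_lt_of_le he h) e'
        · rcases lt_or_ge (x e) (y e) with h2 | h2
          · exact hP e h2 e'
          · -- y e ≤ x e, y is maximal at e, so x e1 < y e1 ≤ y e ≤ x e ≤ x e1, contradiction
            exact absurd (hP e1 he1 e)
              (not_le.mpr (lt_of_lt_of_le he1 ((hQ e h e1).trans h2)))
end

section
/- Let z, z' : S → ℝ≥0 be rational for the diversifying choice function, with z fully filling (|z| = q). Then z ⪰ z' (i.e. C(z ∨ z') = z) if and only if z(e) ≥ z'(e) for all e in the tail T(z). -/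
open scoped NNReal

/-- The head `H(z)` of a rational vector `z`: if `z` is fully filling (`∑ e, z e = q`)
it is the set of coordinates where `z` attains its maximum, and otherwise it is `∅`. -/
def divHead {S : Type*} [Fintype S] (q : ℝ≥0) (z : S → ℝ≥0) : Set S :=
  {e | (∑ e', z e') = q ∧ z e = Finset.univ.sup z}

/-- The tail `T(z)` is the complement of the head. -/
def divTail {S : Type*} [Fintype S] (q : ℝ≥0) (z : S → ℝ≥0) : Set S :=
  {e | e ∉ divHead q z}

/-- For rational `z, z'` with `z` fully filling (`|z| = q`):
`z ⪰ z'` (i.e. `C(z ∨ z') = z`) if and only if `z e ≥ z' e` for all `e` in the tail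
`T(z)`. -/
theorem divChoice_pref_iff_tail {S : Type*} [Fintype S] (q : ℝ≥0) (z z' : S → ℝ≥0)
    (hz : IsDivChoice q z z) (hz' : IsDivChoice q z' z')
    (hfull : (∑ e, z e) = q) :
    IsDivChoice q (fun e => max (z e) (z' e)) z ↔ ∀ e ∈ divTail q z, z' e ≤ z e := by
  constructor
  · rintro (⟨hle, heq⟩ | ⟨hlt, r, hr, heq⟩) e he
    · have h1 := congrFun heq e
      rw [h1]
      exact le_max_right _ _
    · have hne : z e ≠ Finset.univ.sup z := by
        intro hcon
        exact he ⟨hfull, hcon⟩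
      have hlt' : z e < Finset.univ.sup z :=
        lt_of_le_of_ne (Finset.le_sup (Finset.mem_univ e)) hne
      obtain ⟨e0, _, he0⟩ := Finset.exists_mem_eq_sup Finset.univ
        ⟨e, Finset.mem_univ e⟩ z
      have h0 := congrFun heq e0
      have hMr : Finset.univ.sup z ≤ r := by
        rw [he0, h0]; exact min_le_left _ _
      have her : z e < r := lt_of_lt_of_le hlt' hMr
      by_contra hcon
      push_neg at hcon
      have h1 := congrFun heq e
      simp only [max_eq_right hcon.le] at h1
      have : z e < min r (z' e) := lt_min her hcon
      rw [← h1] at this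
      exact lt_irrefl _ this
  · intro h
    set M := Finset.univ.sup z with hM
    have hkey : ∀ e, min M (max (z e) (z' e)) = z e := by
      intro e
      by_cases hhead : z e = M
      · have : M ≤ max (z e) (z' e) := le_trans (le_of_eq hhead.symm) (le_max_left _ _)
        rw [min_eq_left this, hhead]
      · have htail : e ∈ divTail q z := fun hc => hhead hc.2
        rw [max_eq_left (h e htail)]
        exact min_eq_right (Finset.le_sup (Finset.mem_univ e))
    by_cases heq : (fun e => max (z e) (z' e)) = z
    · left
      exact ⟨by rw [heq, hfull], heq.symm⟩
    · right
      obtain ⟨e, hne⟩ : ∃ e, max (z e) (z' e) ≠ z e := by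
        by_contra hc
        push_neg at hc
        exact heq (funext hc)
      refine ⟨?_, M, ?_, ?_⟩
      · calc q = ∑ e, z e := hfull.symm
          _ < ∑ e, max (z e) (z' e) :=
            Finset.sum_lt_sum (fun i _ => le_max_left _ _)
              ⟨e, Finset.mem_univ e, lt_of_le_of_ne (le_max_left _ _) (Ne.symm hne)⟩
      · rw [Finset.sum_congr rfl (fun e _ => hkey e), hfull]
      · exact funext fun e => (hkey e).symm
end

section
/- Let z, z' : S → ℝ≥0 both be rational and fully filling (|z| = |z'| = q) for the diversifying choice function, and suppose z ⪰ z' (i.e. C(z ∨ z') = z). Then max_{e∈S} z(e) ≤ max_{e∈S} z'(e) and H(z) ⊇ H(z'). -/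
open scoped NNReal

/-- For rational fully filling `z, z'` (`|z| = |z'| = q`) with
`z ⪰ z'` (i.e. `C(z ∨ z') = z`): the maximum value of `z` is at most the maximum value
of `z'`, and `H(z) ⊇ H(z')`. -/
theorem divChoice_pref_head {S : Type*} [Fintype S] (q : ℝ≥0) (z z' : S → ℝ≥0)
    (hz : IsDivChoice q z z) (hz' : IsDivChoice q z' z')
    (hfull : (∑ e, z e) = q) (hfull' : (∑ e, z' e) = q)
    (hpref : IsDivChoice q (fun e => max (z e) (z' e)) z) :
    Finset.univ.sup z ≤ Finset.univ.sup z' ∧ divHead q z' ⊆ divHead q z := by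
  have hsums : (∑ e, z' e) = ∑ e, z e := by rw [hfull, hfull']
  rcases hpref with ⟨hle, heq⟩ | ⟨hlt, r, hrsum, hreq⟩
  · -- z = z ⊔ z', so z' ≤ z pointwise; equal sums force z' = z
    have hle' : ∀ e, z' e ≤ z e := fun e =>
      (congrFun heq e) ▸ le_max_right (z e) (z' e)
    have hzz : ∀ e ∈ Finset.univ, z' e = z e :=
      (Finset.sum_eq_sum_iff_of_le (fun e _ => hle' e)).mp hsums
    have hfun : z' = z := funext fun e => hzz e (Finset.mem_univ e)
    subst hfun
    exact ⟨le_rfl, fun e he => he⟩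
  · have hzr : ∀ e, z e ≤ r := fun e =>
      (congrFun hreq e) ▸ min_le_left r _
    have hsupr : Finset.univ.sup z ≤ r := Finset.sup_le fun e _ => hzr e
    have hsup : Finset.univ.sup z ≤ Finset.univ.sup z' := by
      by_contra h
      push_neg at h
      have hle' : ∀ e, z' e ≤ z e := by
        intro e
        have he := congrFun hreq e
        rcases le_total r (max (z e) (z' e)) with hrm | hmr
        · have hzer : z e = r := he.trans (min_eq_left hrm)
          calc z' e ≤ Finset.univ.sup z' := Finset.le_sup (Finset.mem_univ e)
            _ ≤ Finset.univ.sup z := le_of_lt h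
            _ ≤ r := hsupr
            _ = z e := hzer.symm
        · have : z e = max (z e) (z' e) := he.trans (min_eq_right hmr)
          exact le_trans (le_max_right (z e) (z' e)) this.symm.le
      have hzz : ∀ e ∈ Finset.univ, z' e = z e :=
        (Finset.sum_eq_sum_iff_of_le (fun e _ => hle' e)).mp hsums
      have hfun : z' = z := funext fun e => hzz e (Finset.mem_univ e)
      rw [hfun] at h
      exact lt_irrefl _ h
    refine ⟨hsup, fun e he => ?_⟩
    obtain ⟨_, hmax'⟩ := he
    refine ⟨hfull, ?_⟩
    have he2 := congrFun hreq e
    have h1 : Finset.univ.sup z ≤ max (z e) (z' e) := by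
      calc Finset.univ.sup z ≤ Finset.univ.sup z' := hsup
        _ = z' e := hmax'.symm
        _ ≤ max (z e) (z' e) := le_max_right _ _
    have h2 : Finset.univ.sup z ≤ z e := by
      exact he2 ▸ le_min hsupr h1
    exact le_antisymm (Finset.le_sup (Finset.mem_univ e)) h2
end

section
/- The diversifying choice function is monotone with respect to revealed preference: for all z, z' : S → ℝ≥0 with z ≤ z' pointwise, one has C(z') ⪰ C(z) (i.e. C(C(z') ∨ C(z)) = C(z')) and H(C(z')) ⊇ H(C(z)). -/
open scoped NNReal

/-- The diversifying choice function is monotone with respect to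
revealed preference: if `z ≤ z'` pointwise, then `C(z') ⪰ C(z)`
(i.e. `C(C(z') ∨ C(z)) = C(z')`) and `H(C(z')) ⊇ H(C(z))`. -/
theorem divChoice_monotone {S : Type*} [Fintype S] (q : ℝ≥0) (z z' cz cz' : S → ℝ≥0)
    (h : ∀ e, z e ≤ z' e) (hz : IsDivChoice q z cz) (hz' : IsDivChoice q z' cz') :
    IsDivChoice q (fun e => max (cz' e) (cz e)) cz' ∧ divHead q cz ⊆ divHead q cz' := by
  have hzsum : (∑ e, z e) ≤ ∑ e, z' e := Finset.sum_le_sum fun e _ => h e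
  rcases hz' with ⟨hs', rfl⟩ | ⟨hs', r', hr'q, rfl⟩
  · -- C(z') = z'
    have hzz : cz = z := by
      rcases hz with ⟨_, hc⟩ | ⟨hq, _⟩
      · exact hc
      · exact absurd (lt_of_lt_of_le hq (le_trans hzsum hs')) (lt_irrefl q)
    subst hzz
    constructor
    · have hfe : (fun e => max (cz' e) (cz e)) = cz' := funext fun e => max_eq_left (h e)
      have hsum2 : (∑ e, max (cz' e) (cz e)) = ∑ e, cz' e :=
        Finset.sum_congr rfl fun e _ => max_eq_left (h e)
      exact Or.inl ⟨hsum2.trans_le hs', hfe.symm⟩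
    · rintro e ⟨hsum, hmax⟩
      have hsum' : (∑ e, cz e) = ∑ e, cz' e :=
        le_antisymm hzsum (hs'.trans hsum.ge)
      have heq : ∀ e ∈ Finset.univ, cz e = cz' e :=
        (Finset.sum_eq_sum_iff_of_le fun e _ => h e).mp hsum'
      have hzz' : cz = cz' := funext fun e => heq e (Finset.mem_univ e)
      exact ⟨hzz' ▸ hsum, hzz' ▸ hmax⟩
  · -- C(z') = min r' ∘ z'
    have hle : ∀ e, cz e ≤ z e := by
      rcases hz with ⟨_, hc⟩ | ⟨_, r, _, hc⟩
      · exact fun e => (hc ▸ le_refl _)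
      · exact fun e => hc ▸ min_le_right r (z e)
    have key : ∀ e, min r' (max (min r' (z' e)) (cz e)) = min r' (z' e) := by
      intro e
      rw [min_max_distrib_left]
      have h1 : min r' (min r' (z' e)) = min r' (z' e) :=
        min_eq_right (min_le_left _ _)
      have h2 : min r' (cz e) ≤ min r' (z' e) :=
        min_le_min le_rfl ((hle e).trans (h e))
      rw [h1]
      exact max_eq_left h2
    constructor
    · by_cases hm : (∑ e, max (min r' (z' e)) (cz e)) ≤ q
      · left
        refine ⟨hm, ?_⟩
        have hge : q ≤ ∑ e, max (min r' (z' e)) (cz e) := by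
          rw [← hr'q]
          exact Finset.sum_le_sum fun e _ => le_max_left _ _
        have hsum' : (∑ e, min r' (z' e)) = ∑ e, max (min r' (z' e)) (cz e) := by
          rw [hr'q]; exact le_antisymm hge hm
        have heq := (Finset.sum_eq_sum_iff_of_le
          (fun e _ => le_max_left (min r' (z' e)) (cz e))).mp hsum'
        exact funext fun e => heq e (Finset.mem_univ e)
      · right
        refine ⟨lt_of_not_ge hm, r', ?_, funext fun e => (key e).symm⟩
        calc (∑ e, min r' (max (min r' (z' e)) (cz e)))
            = ∑ e, min r' (z' e) := Finset.sum_congr rfl fun e _ => key e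
          _ = q := hr'q
    · rintro e ⟨hsum, hmax⟩
      refine ⟨hr'q, ?_⟩
      by_cases hb : r' ≤ z' e
      · have hce : min r' (z' e) = r' := min_eq_left hb
        refine le_antisymm (Finset.le_sup (f := fun e => min r' (z' e)) (Finset.mem_univ e))
          (Finset.sup_le fun g _ => ?_)
        show min r' (z' g) ≤ min r' (z' e)
        rw [hce]
        exact min_le_left _ _
      · push_neg at hb
        have hcc : ∀ g ∈ Finset.univ, cz g ≤ min r' (z' g) := by
          intro g _
          have h1 : cz g ≤ cz e := hmax ▸ Finset.le_sup (Finset.mem_univ g)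
          have h2 : cz g ≤ r' := le_of_lt (lt_of_le_of_lt
            (h1.trans ((hle e).trans (h e))) hb)
          exact le_min h2 ((hle g).trans (h g))
        have hsum' : (∑ e, cz e) = ∑ e, min r' (z' e) := by rw [hsum, hr'q]
        have heq := (Finset.sum_eq_sum_iff_of_le hcc).mp hsum'
        have hczz : (fun e => min r' (z' e)) = cz :=
          funext fun g => (heq g (Finset.mem_univ g)).symm
        show (fun e => min r' (z' e)) e = Finset.univ.sup (fun e => min r' (z' e))
        rw [hczz]
        exact hmax
end

section
/- Let x, y : S → ℝ≥0 be rational for the diversifying choice function with x fully filling (|x| = q) and x ⪰ y (i.e. C(x ∨ y) = x). If e, e' ∈ S satisfy x(e) < y(e) and x(e') > y(e'), then x(e') ≤ x(e) and y(e') < y(e). -/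
open scoped NNReal

/-- Let `x, y` be rational with `x` fully filling (`|x| = q`) and
`x ⪰ y` (i.e. `C(x ∨ y) = x`). If `x e < y e` and `x e' > y e'`, then `x e' ≤ x e`
and `y e' < y e`. -/
theorem divChoice_swap_ineq {S : Type*} [Fintype S] (q : ℝ≥0) (x y : S → ℝ≥0)
    (hx : IsDivChoice q x x) (hy : IsDivChoice q y y)
    (hfull : (∑ e, x e) = q)
    (hpref : IsDivChoice q (fun e => max (x e) (y e)) x)
    (e e' : S) (h1 : x e < y e) (h2 : y e' < x e') :
    x e' ≤ x e ∧ y e' < y e := by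
  rcases hpref with ⟨_, hxeq⟩ | ⟨_, r, _, hxeq⟩
  · have he := congrFun hxeq e
    simp only [sup_eq_right.mpr h1.le] at he
    exact absurd he h1.ne
  · have he := congrFun hxeq e
    simp only [sup_eq_right.mpr h1.le] at he
    have hr : r < y e := by
      by_contra h
      push_neg at h
      rw [inf_eq_right.mpr h] at he
      exact absurd he h1.ne
    rw [inf_eq_left.mpr hr.le] at he
    have he' := congrFun hxeq e'
    simp only [] at he'
    have h3 : x e' ≤ r := he' ▸ inf_le_left
    exact ⟨he ▸ h3, lt_of_lt_of_le h2 (h3.trans (he ▸ h1.le))⟩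
end

section
/- In the diversifying bipartite market (G, b, q) there exists exactly one stable assignment. -/
open scoped NNReal

attribute [local instance] Classical.propDecidable

/-- `IsDivChoiceOn S qv z w` asserts that, on the coordinates in the finite set `S`,
`w` agrees with the value of the diversifying choice function with quota `qv` applied
to the restriction of `z` to `S`: if `∑_{e ∈ S} z e ≤ qv` then the choice is `z` itself,
and otherwise it is `e ↦ min r (z e)`, where `r ≥ 0` is the (unique) cutting height
satisfying `∑_{e ∈ S} min r (z e) = qv`. -/
def IsDivChoiceOn {E : Type*} (S : Finset E) (qv : ℝ≥0) (z w : E → ℝ≥0) : Prop :=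
  ((∑ e ∈ S, z e) ≤ qv ∧ ∀ e ∈ S, w e = z e) ∨
    (qv < (∑ e ∈ S, z e) ∧
      ∃ r : ℝ≥0, (∑ e ∈ S, min r (z e)) = qv ∧ ∀ e ∈ S, w e = min r (z e))

/-- The head `H(x_v)` of `x` at a vertex whose set of incident edges is `S` and whose
quota is `qv`: the set of edges of `S` where `x` attains its maximum over `S`, provided
`∑_{e ∈ S} x e = qv`, and `∅` otherwise. -/
def headOn {E : Type*} (S : Finset E) (qv : ℝ≥0) (x : E → ℝ≥0) : Set E :=
  {e | e ∈ S ∧ (∑ e' ∈ S, x e') = qv ∧ x e = S.sup x}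

/-- An edge `e` is satiated for a vertex with incident edges `S` and quota `qv`
(w.r.t. capacities `b` and assignment `x`) if `e ∈ H(x_v) ∪ U(x_v)`,
i.e. `e` is in the head or its capacity is attained. -/
def satiatedOn {E : Type*} (S : Finset E) (qv : ℝ≥0) (b x : E → ℝ≥0) (e : E) : Prop :=
  e ∈ headOn S qv x ∨ x e = b e

/-- The set of edges incident to firm `i` (edges `e` with `firm e = i`). -/
noncomputable def firmEdges {E F : Type*} [Fintype E] (firm : E → F) (i : F) : Finset E :=
  Finset.univ.filter fun e => firm e = i

/-- The set of edges incident to worker `j` (edges `e` with `worker e = j`). -/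
noncomputable def workerEdges {E W : Type*} [Fintype E] (worker : E → W) (j : W) : Finset E :=
  Finset.univ.filter fun e => worker e = j

/-- A stable assignment of the diversifying bipartite market: the finite bipartite
(multi)graph has parts `F` (firms) and `W` (workers) and edge set `E`, the edge `e`
joining firm `firm e` to worker `worker e`; `b` gives edge capacities and `qF`, `qW`
the vertex quotas. An assignment `x : E → ℝ≥0` is stable if it is admissible (`x ≤ b`),
rational at every vertex (`C_v(x_v) = x_v`), and has no blocking edge, i.e. every edge
is satiated for at least one of its two endpoints. -/
def StableBip {E F W : Type*} [Fintype E] (firm : E → F) (worker : E → W)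
    (b : E → ℝ≥0) (qF : F → ℝ≥0) (qW : W → ℝ≥0) (x : E → ℝ≥0) : Prop :=
  (∀ e, x e ≤ b e) ∧
  (∀ i : F, IsDivChoiceOn (firmEdges firm i) (qF i) x x) ∧
  (∀ j : W, IsDivChoiceOn (workerEdges worker j) (qW j) x x) ∧
  ∀ e : E, satiatedOn (firmEdges firm (firm e)) (qF (firm e)) b x e ∨
    satiatedOn (workerEdges worker (worker e)) (qW (worker e)) b x e

open scoped ENNReal

section Level


variable {E : Type*}

/-- water level -/
noncomputable def divLevel (S : Finset E) (c : E → ℝ≥0∞) (q : ℝ≥0∞) : ℝ≥0∞ :=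
  sSup {t | ∑ e ∈ S, min (c e) t ≤ q}

lemma min_le_min_add {c s t : ℝ≥0∞} (h : s ≤ t) : min c t ≤ min c s + (t - s) := by
  rcases le_total c s with hc | hc
  · rw [min_eq_left hc, min_eq_left (hc.trans h)]; exact le_self_add
  · rw [min_eq_right hc]
    calc min c t ≤ t := min_le_right _ _
      _ = s + (t - s) := (add_tsub_cancel_of_le h).symm

lemma sum_min_lip (S : Finset E) (c : E → ℝ≥0∞) {s t : ℝ≥0∞} (h : s ≤ t) :
    ∑ e ∈ S, min (c e) t ≤ (∑ e ∈ S, min (c e) s) + S.card * (t - s) := by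
  calc ∑ e ∈ S, min (c e) t ≤ ∑ e ∈ S, (min (c e) s + (t - s)) :=
        Finset.sum_le_sum fun e _ => min_le_min_add h
    _ = (∑ e ∈ S, min (c e) s) + S.card * (t - s) := by
        rw [Finset.sum_add_distrib, Finset.sum_const, nsmul_eq_mul]

lemma sum_min_mono (S : Finset E) (c : E → ℝ≥0∞) {s t : ℝ≥0∞} (h : s ≤ t) :
    ∑ e ∈ S, min (c e) s ≤ ∑ e ∈ S, min (c e) t :=
  Finset.sum_le_sum fun e _ => min_le_min_left _ h

lemma le_divLevel {S : Finset E} {c : E → ℝ≥0∞} {q t : ℝ≥0∞}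
    (h : ∑ e ∈ S, min (c e) t ≤ q) : t ≤ divLevel S c q := le_sSup h

lemma divLevel_spec_le (S : Finset E) (c : E → ℝ≥0∞) (q : ℝ≥0∞)
    (hc : ∀ e ∈ S, c e ≠ ⊤) :
    ∑ e ∈ S, min (c e) (divLevel S c q) ≤ q := by
  set L := divLevel S c q with hLdef
  rcases eq_or_ne L ⊤ with hT | hT
  · -- take t0 = sup of caps; find a ∈ A above it
    have ht0 : S.sup c < ⊤ := by
      rcases S.eq_empty_or_nonempty with rfl | hS
      · simpa using lt_top_iff_ne_top.mpr (by simp : (⊥ : ℝ≥0∞) ≠ ⊤)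
      · exact (Finset.sup_lt_iff (by simp)).2 fun e he => lt_top_iff_ne_top.2 (hc e he)
    have h2 : S.sup c < divLevel S c q := by rw [← hLdef, hT]; exact ht0
    rw [divLevel] at h2
    obtain ⟨a, ha, hlt⟩ := lt_sSup_iff.mp h2
    have : ∑ e ∈ S, min (c e) L ≤ ∑ e ∈ S, min (c e) a := by
      refine Finset.sum_le_sum fun e he => ?_
      have : c e ≤ a := le_of_lt (lt_of_le_of_lt (Finset.le_sup he) hlt)
      rw [min_eq_left this]; exact min_le_left _ _
    exact this.trans ha
  · rcases S.eq_empty_or_nonempty with rfl | hS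
    · simp
    have hcard : (S.card : ℝ≥0∞) ≠ 0 := by
      simp [Finset.card_eq_zero, hS.ne_empty]
    rcases eq_or_ne L 0 with hL0 | hL0
    · rw [hL0]; simp
    apply ENNReal.le_of_forall_pos_le_add
    intro ε hε hq
    set δ : ℝ≥0∞ := (ε : ℝ≥0∞) / S.card with hδdef
    have hδ0 : δ ≠ 0 := by
      rw [hδdef]
      simp [ENNReal.div_eq_zero_iff, hε.ne', ENNReal.natCast_ne_top]
    have hsub : L - δ < L := ENNReal.sub_lt_self hT hL0 hδ0
    have hsub' : L - δ < sSup {t | ∑ e ∈ S, min (c e) t ≤ q} := by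
      rw [← divLevel, ← hLdef]; exact hsub
    obtain ⟨a, ha, hlt⟩ := lt_sSup_iff.mp hsub'
    have haL : a ≤ L := by rw [hLdef, divLevel]; exact le_sSup ha
    have hLa : L - a ≤ δ := by
      rcases le_total δ L with hδL | hδL
      · have : L ≤ a + δ := by
          have := hlt.le
          calc L = (L - δ) + δ := (tsub_add_cancel_of_le hδL).symm
            _ ≤ a + δ := by gcongr
        exact tsub_le_iff_left.mpr this
      · exact le_trans (tsub_le_self.trans hδL) le_rfl
    have key : ∑ e ∈ S, min (c e) L ≤ (∑ e ∈ S, min (c e) a) + S.card * δ := by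
      refine le_trans (sum_min_lip S c haL) ?_
      gcongr
    have hcd : (S.card : ℝ≥0∞) * δ ≤ ε := by
      rw [hδdef, ENNReal.mul_div_cancel hcard (ENNReal.natCast_ne_top _)]
    calc ∑ e ∈ S, min (c e) L ≤ (∑ e ∈ S, min (c e) a) + S.card * δ := key
      _ ≤ q + ε := add_le_add ha hcd

lemma divLevel_spec_ge (S : Finset E) (c : E → ℝ≥0∞) (q : ℝ≥0∞)
    (hT : divLevel S c q ≠ ⊤) :
    q ≤ ∑ e ∈ S, min (c e) (divLevel S c q) := by
  set L := divLevel S c q with hLdef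
  rcases S.eq_empty_or_nonempty with rfl | hS
  · exfalso
    apply hT
    rw [hLdef, divLevel]
    have : {t : ℝ≥0∞ | ∑ e ∈ (∅ : Finset E), min (c e) t ≤ q} = Set.univ := by
      ext t; simp
    rw [this, sSup_univ]
  have hcard : (S.card : ℝ≥0∞) ≠ 0 := by
    simp [Finset.card_eq_zero, hS.ne_empty]
  apply ENNReal.le_of_forall_pos_le_add
  intro ε hε hfin
  set δ : ℝ≥0∞ := (ε : ℝ≥0∞) / S.card with hδdef
  have hδ0 : δ ≠ 0 := by
    rw [hδdef]
    simp [ENNReal.div_eq_zero_iff, hε.ne', ENNReal.natCast_ne_top]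
  have hnt : L < L + δ := ENNReal.lt_add_right hT hδ0
  have hnotA : ¬ (∑ e ∈ S, min (c e) (L + δ) ≤ q) := by
    intro h
    exact absurd (le_divLevel h) (not_le.mpr (by rw [← hLdef]; exact hnt))
  have hq : q < ∑ e ∈ S, min (c e) (L + δ) := not_le.mp hnotA
  have hlip : ∑ e ∈ S, min (c e) (L + δ) ≤ (∑ e ∈ S, min (c e) L) + S.card * δ := by
    have h2 := sum_min_lip S c (le_self_add : L ≤ L + δ)
    have h3 : L + δ - L = δ := by
      rw [add_comm, ENNReal.add_sub_cancel_right hT]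
    rw [h3] at h2; exact h2
  have hcd : (S.card : ℝ≥0∞) * δ ≤ ε := by
    rw [hδdef, ENNReal.mul_div_cancel hcard (ENNReal.natCast_ne_top _)]
  calc q ≤ ∑ e ∈ S, min (c e) (L + δ) := hq.le
    _ ≤ (∑ e ∈ S, min (c e) L) + S.card * δ := hlip
    _ ≤ (∑ e ∈ S, min (c e) L) + ε := by gcongr

lemma divLevel_antitone {S : Finset E} {c c' : E → ℝ≥0∞} {q : ℝ≥0∞}
    (h : ∀ e ∈ S, c e ≤ c' e) : divLevel S c' q ≤ divLevel S c q := by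
  apply sSup_le_sSup
  intro t ht
  exact le_trans (Finset.sum_le_sum fun e he => min_le_min_right _ (h e he)) ht

end Level


section Market

variable {E F W : Type*} [Fintype E]
variable (firm : E → F) (worker : E → W) (b : E → ℝ≥0) (qF : F → ℝ≥0) (qW : W → ℝ≥0)

/-- worker levels induced by firm levels -/
noncomputable def wLev (ρ : F → ℝ≥0∞) (j : W) : ℝ≥0∞ :=
  divLevel (workerEdges worker j) (fun e => min (b e : ℝ≥0∞) (ρ (firm e))) ((qW j : ℝ≥0∞))

/-- firm level operator -/
noncomputable def fStep (ρ : F → ℝ≥0∞) (i : F) : ℝ≥0∞ :=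
  divLevel (firmEdges firm i)
    (fun e => min (b e : ℝ≥0∞) (wLev firm worker b qW ρ (worker e))) ((qF i : ℝ≥0∞))

lemma wLev_antitone {ρ ρ' : F → ℝ≥0∞} (h : ρ ≤ ρ') :
    wLev firm worker b qW ρ' ≤ wLev firm worker b qW ρ := fun _j =>
  divLevel_antitone fun e _ => min_le_min_left _ (h _)

lemma fStep_mono : Monotone (fStep firm worker b qF qW) := by
  intro ρ ρ' h i
  exact divLevel_antitone fun e _ =>
    min_le_min_left _ (wLev_antitone firm worker b qW h _)

/-- firm levels: least fixed point -/
noncomputable def fLev : F → ℝ≥0∞ :=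
  OrderHom.lfp ⟨fStep firm worker b qF qW, fStep_mono firm worker b qF qW⟩

lemma fLev_fixed :
    fStep firm worker b qF qW (fLev firm worker b qF qW) = fLev firm worker b qF qW :=
  OrderHom.map_lfp
    (⟨fStep firm worker b qF qW, fStep_mono firm worker b qF qW⟩ : (F → ℝ≥0∞) →o (F → ℝ≥0∞))

/-- candidate stable assignment -/
noncomputable def stabX (e : E) : ℝ≥0 :=
  (min (b e : ℝ≥0∞) (min (fLev firm worker b qF qW (firm e))
    (wLev firm worker b qW (fLev firm worker b qF qW) (worker e)))).toNNReal

lemma stabX_stable : StableBip firm worker b qF qW (stabX firm worker b qF qW) := by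
  set ρ : F → ℝ≥0∞ := fLev firm worker b qF qW with hρ
  set σ : W → ℝ≥0∞ := wLev firm worker b qW ρ with hσ
  set x : E → ℝ≥0 := stabX firm worker b qF qW with hx
  have key : ∀ e, (x e : ℝ≥0∞) = min (b e : ℝ≥0∞) (min (ρ (firm e)) (σ (worker e))) := by
    intro e
    refine ENNReal.coe_toNNReal ?_
    exact ((min_le_left _ _).trans_lt ENNReal.coe_lt_top).ne
  have hfcapne : ∀ (i : F), ∀ e ∈ firmEdges firm i,
      (fun e => min (b e : ℝ≥0∞) (σ (worker e))) e ≠ ⊤ := fun i e _ =>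
    ((min_le_left _ _).trans_lt ENNReal.coe_lt_top).ne
  have hwcapne : ∀ (j : W), ∀ e ∈ workerEdges worker j,
      (fun e => min (b e : ℝ≥0∞) (ρ (firm e))) e ≠ ⊤ := fun j e _ =>
    ((min_le_left _ _).trans_lt ENNReal.coe_lt_top).ne
  have hfix : ∀ i : F, ρ i = divLevel (firmEdges firm i)
      (fun e => min (b e : ℝ≥0∞) (σ (worker e))) ((qF i : ℝ≥0∞)) := by
    intro i
    conv_lhs => rw [hρ, ← fLev_fixed firm worker b qF qW]
    rfl
  have hwfix : ∀ j : W, σ j = divLevel (workerEdges worker j)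
      (fun e => min (b e : ℝ≥0∞) (ρ (firm e))) ((qW j : ℝ≥0∞)) := fun j => rfl
  have hfcap : ∀ (i : F), ∀ e ∈ firmEdges firm i,
      (x e : ℝ≥0∞) = min (min (b e : ℝ≥0∞) (σ (worker e))) (ρ i) := by
    intro i e he
    have hfe : firm e = i := (Finset.mem_filter.mp he).2
    rw [key e, hfe, min_comm (ρ i) (σ (worker e)), ← min_assoc]
  have hwcap : ∀ (j : W), ∀ e ∈ workerEdges worker j,
      (x e : ℝ≥0∞) = min (min (b e : ℝ≥0∞) (ρ (firm e))) (σ j) := by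
    intro j e he
    have hwe : worker e = j := (Finset.mem_filter.mp he).2
    rw [key e, hwe, ← min_assoc]
  have hfsum_le : ∀ i : F, ∑ e ∈ firmEdges firm i, (x e : ℝ≥0∞) ≤ (qF i : ℝ≥0∞) := by
    intro i
    calc ∑ e ∈ firmEdges firm i, (x e : ℝ≥0∞)
        = ∑ e ∈ firmEdges firm i, min (min (b e : ℝ≥0∞) (σ (worker e))) (ρ i) :=
          Finset.sum_congr rfl (hfcap i)
      _ ≤ (qF i : ℝ≥0∞) := by
          rw [hfix i]; exact divLevel_spec_le _ _ _ (hfcapne i)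
  have hwsum_le : ∀ j : W, ∑ e ∈ workerEdges worker j, (x e : ℝ≥0∞) ≤ (qW j : ℝ≥0∞) := by
    intro j
    calc ∑ e ∈ workerEdges worker j, (x e : ℝ≥0∞)
        = ∑ e ∈ workerEdges worker j, min (min (b e : ℝ≥0∞) (ρ (firm e))) (σ j) :=
          Finset.sum_congr rfl (hwcap j)
      _ ≤ (qW j : ℝ≥0∞) := by
          rw [hwfix j]; exact divLevel_spec_le _ _ _ (hwcapne j)
  have hfsum_le' : ∀ i : F, ∑ e ∈ firmEdges firm i, x e ≤ qF i := by
    intro i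
    rw [← ENNReal.coe_le_coe, ENNReal.coe_finset_sum]
    exact hfsum_le i
  have hwsum_le' : ∀ j : W, ∑ e ∈ workerEdges worker j, x e ≤ qW j := by
    intro j
    rw [← ENNReal.coe_le_coe, ENNReal.coe_finset_sum]
    exact hwsum_le j
  refine ⟨?_, ?_, ?_, ?_⟩
  · intro e
    rw [← ENNReal.coe_le_coe, key e]
    exact min_le_left _ _
  · exact fun i => Or.inl ⟨hfsum_le' i, fun _ _ => rfl⟩
  · exact fun j => Or.inl ⟨hwsum_le' j, fun _ _ => rfl⟩
  · intro e
    by_cases hb : x e = b e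
    · exact Or.inl (Or.inr hb)
    have hxb : (x e : ℝ≥0∞) < (b e : ℝ≥0∞) := by
      refine lt_of_le_of_ne ?_ (by exact_mod_cast hb)
      rw [key e]; exact min_le_left _ _
    have hmlt : min (ρ (firm e)) (σ (worker e)) < (b e : ℝ≥0∞) := by
      by_contra hc
      push_neg at hc
      rw [key e, min_eq_left hc] at hxb
      exact lt_irrefl _ hxb
    have hxm : (x e : ℝ≥0∞) = min (ρ (firm e)) (σ (worker e)) := by
      rw [key e, min_eq_right hmlt.le]
    rcases le_total (ρ (firm e)) (σ (worker e)) with hρσ | hσρ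
    · -- head at the firm
      have hxρ : (x e : ℝ≥0∞) = ρ (firm e) := by rw [hxm, min_eq_left hρσ]
      have hρne : ρ (firm e) ≠ ⊤ := by
        rw [← hxρ]; exact ENNReal.coe_ne_top
      have hge : (qF (firm e) : ℝ≥0∞) ≤ ∑ e' ∈ firmEdges firm (firm e), (x e' : ℝ≥0∞) := by
        have := divLevel_spec_ge (firmEdges firm (firm e))
          (fun e' => min (b e' : ℝ≥0∞) (σ (worker e'))) ((qF (firm e) : ℝ≥0∞))
          (by rw [← hfix (firm e)]; exact hρne)
        rw [← hfix (firm e)] at this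
        calc (qF (firm e) : ℝ≥0∞) ≤ _ := this
          _ = ∑ e' ∈ firmEdges firm (firm e), (x e' : ℝ≥0∞) :=
            (Finset.sum_congr rfl (hfcap (firm e))).symm
      have hsum : ∑ e' ∈ firmEdges firm (firm e), x e' = qF (firm e) := by
        rw [← ENNReal.coe_inj, ENNReal.coe_finset_sum]
        exact le_antisymm (hfsum_le (firm e)) hge
      have hmemS : e ∈ firmEdges firm (firm e) :=
        Finset.mem_filter.mpr ⟨Finset.mem_univ _, rfl⟩
      have hsup : x e = (firmEdges firm (firm e)).sup x := by
        refine le_antisymm (Finset.le_sup hmemS) (Finset.sup_le fun e' he' => ?_)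
        rw [← ENNReal.coe_le_coe, hxρ, hfcap (firm e) e' he']
        exact min_le_right _ _
      exact Or.inl (Or.inl ⟨hmemS, hsum, hsup⟩)
    · -- head at the worker
      have hxσ : (x e : ℝ≥0∞) = σ (worker e) := by rw [hxm, min_eq_right hσρ]
      have hσne : σ (worker e) ≠ ⊤ := by
        rw [← hxσ]; exact ENNReal.coe_ne_top
      have hge : (qW (worker e) : ℝ≥0∞) ≤ ∑ e' ∈ workerEdges worker (worker e), (x e' : ℝ≥0∞) := by
        have := divLevel_spec_ge (workerEdges worker (worker e))
          (fun e' => min (b e' : ℝ≥0∞) (ρ (firm e'))) ((qW (worker e) : ℝ≥0∞))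
          (by rw [← hwfix (worker e)]; exact hσne)
        rw [← hwfix (worker e)] at this
        calc (qW (worker e) : ℝ≥0∞) ≤ _ := this
          _ = ∑ e' ∈ workerEdges worker (worker e), (x e' : ℝ≥0∞) :=
            (Finset.sum_congr rfl (hwcap (worker e))).symm
      have hsum : ∑ e' ∈ workerEdges worker (worker e), x e' = qW (worker e) := by
        rw [← ENNReal.coe_inj, ENNReal.coe_finset_sum]
        exact le_antisymm (hwsum_le (worker e)) hge
      have hmemS : e ∈ workerEdges worker (worker e) :=
        Finset.mem_filter.mpr ⟨Finset.mem_univ _, rfl⟩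
      have hsup : x e = (workerEdges worker (worker e)).sup x := by
        refine le_antisymm (Finset.le_sup hmemS) (Finset.sup_le fun e' he' => ?_)
        rw [← ENNReal.coe_le_coe, hxσ, hwcap (worker e) e' he']
        exact min_le_right _ _
      exact Or.inr (Or.inl ⟨hmemS, hsum, hsup⟩)

end Market

section Unique

lemma divChoice_sum_le {E : Type*} {S : Finset E} {qv : ℝ≥0} {x : E → ℝ≥0}
    (h : IsDivChoiceOn S qv x x) : ∑ e ∈ S, x e ≤ qv := by
  rcases h with ⟨h1, -⟩ | ⟨-, r, hr, hx⟩
  · exact h1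
  · exact le_of_eq ((Finset.sum_congr rfl hx).trans hr)

lemma stable_descent {E F W : Type*} [Fintype E] {firm : E → F} {worker : E → W}
    {b : E → ℝ≥0} {qF : F → ℝ≥0} {qW : W → ℝ≥0} {x y : E → ℝ≥0}
    (hx : StableBip firm worker b qF qW x) (hy : StableBip firm worker b qF qW y)
    {e : E} (hlt : y e < x e) :
    ∃ e', x e' < y e' ∧ max (x e') (y e') < x e := by
  obtain ⟨hxb, hxF, hxW, -⟩ := hx
  obtain ⟨-, -, -, hyS⟩ := hy
  have hne : y e ≠ b e := fun h => absurd (h ▸ hxb e) hlt.not_ge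
  have hhead : ∃ S : Finset E, ∃ qv : ℝ≥0,
      e ∈ S ∧ (∑ e' ∈ S, y e') = qv ∧ y e = S.sup y ∧ ∑ e' ∈ S, x e' ≤ qv := by
    rcases hyS e with h | h <;> rcases h with hH | hU
    · exact ⟨firmEdges firm (firm e), qF (firm e), hH.1, hH.2.1, hH.2.2,
        divChoice_sum_le (hxF (firm e))⟩
    · exact absurd hU hne
    · exact ⟨workerEdges worker (worker e), qW (worker e), hH.1, hH.2.1, hH.2.2,
        divChoice_sum_le (hxW (worker e))⟩
    · exact absurd hU hne
  obtain ⟨S, qv, heS, hsum, hsup, hxle⟩ := hhead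
  have hex : ∃ e' ∈ S, x e' < y e' := by
    by_contra hno
    push_neg at hno
    have hlt' : ∑ e' ∈ S, y e' < ∑ e' ∈ S, x e' :=
      Finset.sum_lt_sum (fun e' he' => hno e' he') ⟨e, heS, hlt⟩
    rw [hsum] at hlt'
    exact absurd (hxle.trans_lt hlt') (lt_irrefl _)
  obtain ⟨e', he'S, he'⟩ := hex
  refine ⟨e', he', ?_⟩
  rw [max_eq_right he'.le]
  calc y e' ≤ S.sup y := Finset.le_sup he'S
    _ = y e := hsup.symm
    _ < x e := hlt

lemma stable_unique {E F W : Type*} [Fintype E] {firm : E → F} {worker : E → W}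
    {b : E → ℝ≥0} {qF : F → ℝ≥0} {qW : W → ℝ≥0} {x y : E → ℝ≥0}
    (hx : StableBip firm worker b qF qW x) (hy : StableBip firm worker b qF qW y) :
    x = y := by
  by_contra hne
  have hD : (Finset.univ.filter fun e => x e ≠ y e).Nonempty := by
    by_contra h
    rw [Finset.not_nonempty_iff_eq_empty, Finset.filter_eq_empty_iff] at h
    exact hne (funext fun e => not_ne_iff.mp (h (Finset.mem_univ e)))
  obtain ⟨e, heD, hmin⟩ := Finset.exists_min_image _ (fun e => max (x e) (y e)) hD
  have hexy : x e ≠ y e := (Finset.mem_filter.mp heD).2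
  rcases lt_or_gt_of_ne hexy with h | h
  · obtain ⟨e', h1, h2⟩ := stable_descent hy hx h
    have he'D : e' ∈ Finset.univ.filter fun e => x e ≠ y e :=
      Finset.mem_filter.mpr ⟨Finset.mem_univ _, h1.ne'⟩
    have hcon := hmin e' he'D
    rw [max_comm (y e') (x e')] at h2
    exact absurd hcon (not_le.mpr (h2.trans_le (le_max_right (x e) (y e))))
  · obtain ⟨e', h1, h2⟩ := stable_descent hx hy h
    have he'D : e' ∈ Finset.univ.filter fun e => x e ≠ y e :=
      Finset.mem_filter.mpr ⟨Finset.mem_univ _, h1.ne⟩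
    have hcon := hmin e' he'D
    exact absurd hcon (not_le.mpr (h2.trans_le (le_max_left (x e) (y e))))

end Unique

/-- In the diversifying bipartite market `(G, b, q)` there exists
exactly one stable assignment. -/
theorem stable_existsUnique_bipartite {E F W : Type*} [Fintype E] [Fintype F] [Fintype W]
    (firm : E → F) (worker : E → W) (b : E → ℝ≥0) (qF : F → ℝ≥0) (qW : W → ℝ≥0) :
    ∃! x : E → ℝ≥0, StableBip firm worker b qF qW x := by
  exact ⟨stabX firm worker b qF qW, stabX_stable firm worker b qF qW,
    fun _y hy => stable_unique hy (stabX_stable firm worker b qF qW)⟩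
end

section
/- In the diversifying bipartite market (G, b, q) the set of stable assignments is nonempty: there exists at least one stable assignment. -/
open scoped NNReal

attribute [local instance] Classical.propDecidable

set_option linter.unusedSectionVars false

section Aux
variable {E : Type*} [Fintype E]

private lemma cut_exists (S : Finset E) (z : E → ℝ≥0) (qv : ℝ≥0)
    (h : qv ≤ ∑ e ∈ S, z e) : ∃ r : ℝ≥0, ∑ e ∈ S, min r (z e) = qv := by
  have hcont : Continuous fun r : ℝ≥0 => ∑ e ∈ S, min r (z e) :=
    continuous_finset_sum _ fun e _ => continuous_id.min continuous_const
  have hmem : qv ∈ Set.Icc ((fun r : ℝ≥0 => ∑ e ∈ S, min r (z e)) 0)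
      ((fun r : ℝ≥0 => ∑ e ∈ S, min r (z e)) (S.sup z)) := by
    constructor
    · simp
    · show qv ≤ ∑ e ∈ S, min (S.sup z) (z e)
      calc qv ≤ ∑ e ∈ S, z e := h
        _ = ∑ e ∈ S, min (S.sup z) (z e) :=
          Finset.sum_congr rfl fun e he => (min_eq_right (Finset.le_sup he)).symm
  obtain ⟨r, -, hr⟩ := intermediate_value_Icc zero_le hcont.continuousOn hmem
  exact ⟨r, hr⟩

noncomputable def cutOf (S : Finset E) (qv : ℝ≥0) (z : E → ℝ≥0) : ℝ≥0 :=
  if h : qv < ∑ e ∈ S, z e then (cut_exists S z qv h.le).choose else 0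

lemma cutOf_spec (S : Finset E) (qv : ℝ≥0) (z : E → ℝ≥0) (h : qv < ∑ e ∈ S, z e) :
    ∑ e ∈ S, min (cutOf S qv z) (z e) = qv := by
  rw [cutOf, dif_pos h]; exact (cut_exists S z qv h.le).choose_spec

noncomputable def chooseOn (S : Finset E) (qv : ℝ≥0) (z : E → ℝ≥0) : E → ℝ≥0 :=
  if qv < ∑ e ∈ S, z e then fun e => min (cutOf S qv z) (z e) else z

lemma chooseOn_le (S : Finset E) (qv : ℝ≥0) (z : E → ℝ≥0) (e : E) :
    chooseOn S qv z e ≤ z e := by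
  unfold chooseOn; split
  · exact min_le_right _ _
  · exact le_rfl

lemma sum_chooseOn_le (S : Finset E) (qv : ℝ≥0) (z : E → ℝ≥0) :
    ∑ e ∈ S, chooseOn S qv z e ≤ qv := by
  unfold chooseOn; split
  · rename_i h; simp only []; rw [cutOf_spec S qv z h]
  · rename_i h; exact le_of_not_gt h

lemma cut_antitone (S : Finset E) (qv : ℝ≥0) {z z' : E → ℝ≥0} (hzz : ∀ e, z e ≤ z' e)
    (h : qv < ∑ e ∈ S, z e) (h' : qv < ∑ e ∈ S, z' e) :
    cutOf S qv z' ≤ cutOf S qv z := by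
  set r := cutOf S qv z with hr
  set r' := cutOf S qv z' with hr'
  by_contra hlt
  push_neg at hlt
  have hle : ∀ e ∈ S, min r (z' e) ≤ min r' (z' e) :=
    fun e _ => min_le_min hlt.le le_rfl
  have h2 : qv ≤ ∑ e ∈ S, min r (z' e) := by
    rw [← cutOf_spec S qv z h]
    exact Finset.sum_le_sum fun e _ => min_le_min le_rfl (hzz e)
  have heq : ∑ e ∈ S, min r (z' e) = ∑ e ∈ S, min r' (z' e) :=
    le_antisymm (Finset.sum_le_sum hle) (by rw [cutOf_spec S qv z' h']; exact h2)
  have hterm : ∀ e ∈ S, min r (z' e) = min r' (z' e) :=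
    (Finset.sum_eq_sum_iff_of_le hle).1 heq
  have hze : ∀ e ∈ S, z' e ≤ r := by
    intro e he
    by_contra hc
    push_neg at hc
    have h3 : r < min r' (z' e) := lt_min hlt hc
    rw [← hterm e he, min_eq_left hc.le] at h3
    exact lt_irrefl _ h3
  have : ∑ e ∈ S, min r' (z' e) = ∑ e ∈ S, z' e := by
    refine Finset.sum_congr rfl fun e he => min_eq_right ((hze e he).trans hlt.le)
  rw [cutOf_spec S qv z' h'] at this
  exact absurd this.symm h'.ne'

lemma rej_mono (S : Finset E) (qv : ℝ≥0) {z z' : E → ℝ≥0} (hzz : ∀ e, z e ≤ z' e) (e : E) :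
    z e - chooseOn S qv z e ≤ z' e - chooseOn S qv z' e := by
  unfold chooseOn
  by_cases h : qv < ∑ e ∈ S, z e
  · have h' : qv < ∑ e ∈ S, z' e := h.trans_le (Finset.sum_le_sum fun e _ => hzz e)
    rw [if_pos h, if_pos h']
    have key : ∀ (w : E → ℝ≥0) (r : ℝ≥0), w e - min r (w e) = w e - r := by
      intro w r
      rcases le_total (w e) r with hh | hh
      · simp [min_eq_right hh, tsub_eq_zero_of_le hh]
      · simp [min_eq_left hh]
    rw [key, key]
    exact tsub_le_tsub (hzz e) (cut_antitone S qv hzz h h')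
  · rw [if_neg h]; simp

end Aux

section Market
variable {E F W : Type*} [Fintype E] [Fintype F] [Fintype W]
variable (firm : E → F) (worker : E → W) (b : E → ℝ≥0) (qF : F → ℝ≥0) (qW : W → ℝ≥0)

/-- Firm-side rejection. -/
noncomputable def RejF (p : E → ℝ≥0) (e : E) : ℝ≥0 :=
  p e - chooseOn (firmEdges firm (firm e)) (qF (firm e)) p e

/-- Offer remaining to workers. -/
noncomputable def Yof (p : E → ℝ≥0) (e : E) : ℝ≥0 := b e - RejF firm qF p e

/-- Worker-side rejection. -/
noncomputable def RejW (y : E → ℝ≥0) (e : E) : ℝ≥0 :=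
  y e - chooseOn (workerEdges worker (worker e)) (qW (worker e)) y e

noncomputable def PhiM (p : E → ℝ≥0) (e : E) : ℝ≥0 :=
  b e - RejW worker qW (Yof firm b qF p) e

lemma PhiM_mono {p p' : E → ℝ≥0} (h : p ≤ p') : PhiM firm worker b qF qW p ≤ PhiM firm worker b qF qW p' := by
  have hRF : ∀ e, RejF firm qF p e ≤ RejF firm qF p' e :=
    fun e => rej_mono _ _ (fun e' => h e') e
  have hY : ∀ e, Yof firm b qF p' e ≤ Yof firm b qF p e :=
    fun e => tsub_le_tsub_left (hRF e) _
  have hRW : ∀ e, RejW worker qW (Yof firm b qF p') e ≤ RejW worker qW (Yof firm b qF p) e :=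
    fun e => rej_mono _ _ hY e
  exact fun e => tsub_le_tsub_left (hRW e) _

theorem stable_exists_bipartite'
    (firm : E → F) (worker : E → W) (b : E → ℝ≥0) (qF : F → ℝ≥0) (qW : W → ℝ≥0) :
    ∃ x : E → ℝ≥0, StableBip firm worker b qF qW x := by
  classical
  set Φ := PhiM firm worker b qF qW with hΦ
  set P : Set (E → ℝ≥0) := {p | p ≤ b ∧ p ≤ Φ p} with hP
  have h0P : (fun _ => (0:ℝ≥0)) ∈ P := ⟨fun e => zero_le, fun e => zero_le⟩
  have hbdd : BddAbove P := ⟨b, fun p hp => hp.1⟩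
  set p := sSup P with hp
  have hub : ∀ q ∈ P, q ≤ p := fun q hq => le_csSup hbdd hq
  have hpb : p ≤ b := csSup_le ⟨_, h0P⟩ fun q hq => hq.1
  have hple : p ≤ Φ p :=
    csSup_le ⟨_, h0P⟩ fun q hq => hq.2.trans (PhiM_mono firm worker b qF qW (hub q hq))
  have hΦP : Φ p ∈ P :=
    ⟨fun e => tsub_le_self, PhiM_mono firm worker b qF qW hple⟩
  have hfix : Φ p = p := le_antisymm (hub _ hΦP) hple
  -- the candidate assignment
  set x : E → ℝ≥0 := fun e => chooseOn (firmEdges firm (firm e)) (qF (firm e)) p e with hx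
  set y : E → ℝ≥0 := Yof firm b qF p with hy
  have hxp : ∀ e, x e ≤ p e := fun e => chooseOn_le _ _ _ _
  have hRFe : ∀ e, RejF firm qF p e = p e - x e := fun e => rfl
  have hfixe : ∀ e, p e = b e - RejW worker qW y e := fun e => (congrFun hfix e).symm
  have hcwy : ∀ e, chooseOn (workerEdges worker (worker e)) (qW (worker e)) y e ≤ y e :=
    fun e => chooseOn_le _ _ _ _
  -- key identity : x = worker-side choice of y
  have hxw : ∀ e, x e = chooseOn (workerEdges worker (worker e)) (qW (worker e)) y e := by
    intro e
    have h1 : x e = p e - RejF firm qF p e := by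
      rw [hRFe]; exact (tsub_tsub_cancel_of_le (hxp e)).symm
    have h2 : chooseOn (workerEdges worker (worker e)) (qW (worker e)) y e
        = y e - RejW worker qW y e := (tsub_tsub_cancel_of_le (hcwy e)).symm
    rw [h1, h2, hfixe e]
    show b e - RejW worker qW y e - RejF firm qF p e
        = Yof firm b qF p e - RejW worker qW y e
    rw [Yof, tsub_tsub, tsub_tsub, add_comm]
  have hxb : ∀ e, x e ≤ b e := fun e => (hxp e).trans (hpb e)
  refine ⟨x, hxb, ?_, ?_, ?_⟩
  · -- rationality at firms
    intro i
    left
    refine ⟨?_, fun e _ => rfl⟩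
    have : ∀ e ∈ firmEdges firm i, x e = chooseOn (firmEdges firm i) (qF i) p e := by
      intro e he
      have hfe : firm e = i := by simpa [firmEdges] using he
      rw [hx]; simp only [hfe]
    rw [Finset.sum_congr rfl this]
    exact sum_chooseOn_le _ _ _
  · -- rationality at workers
    intro j
    left
    refine ⟨?_, fun e _ => rfl⟩
    have : ∀ e ∈ workerEdges worker j, x e = chooseOn (workerEdges worker j) (qW j) y e := by
      intro e he
      have hwe : worker e = j := by simpa [workerEdges] using he
      rw [hxw e]; simp only [hwe]
    rw [Finset.sum_congr rfl this]
    exact sum_chooseOn_le _ _ _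
  · -- no blocking edge
    intro e
    by_cases hsat : satiatedOn (firmEdges firm (firm e)) (qF (firm e)) b x e
    · exact Or.inl hsat
    right
    rw [satiatedOn, not_or] at hsat
    obtain ⟨hnh, hnb⟩ := hsat
    have heS : e ∈ firmEdges firm (firm e) := by simp [firmEdges]
    -- firm side: x e = p e
    have hxpe : x e = p e := by
      rw [hx]
      simp only []
      rw [chooseOn]
      split
      · rename_i hov
        set r := cutOf (firmEdges firm (firm e)) (qF (firm e)) p with hr
        have hxe' : ∀ e' ∈ firmEdges firm (firm e), x e' = min r (p e') := by
          intro e' he'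
          have hfe : firm e' = firm e := by simpa [firmEdges] using he'
          rw [hx]; simp only [hfe]; rw [chooseOn, if_pos hov]
        have hsum : ∑ e' ∈ firmEdges firm (firm e), x e' = qF (firm e) := by
          rw [Finset.sum_congr rfl hxe']
          exact cutOf_spec _ _ _ hov
        have hsup : (firmEdges firm (firm e)).sup x ≤ r :=
          Finset.sup_le fun e' he' => (hxe' e' he').le.trans (min_le_left _ _)
        have hxelt : x e < r := by
          rcases lt_or_eq_of_le (Finset.le_sup (f := x) heS) with hlt | heq
          · exact hlt.trans_le hsup
          · exact absurd ⟨heS, hsum, heq⟩ hnh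
        have hthis : x e = min r (p e) := hxe' e heS
        rcases min_cases r (p e) with ⟨hm, _⟩ | ⟨hm, _⟩
        · rw [hm] at hthis; exact absurd hthis hxelt.ne
        · exact hm
      · rfl
    have hye : y e = b e := by
      rw [hy, Yof, hRFe, hxpe, tsub_self, tsub_zero]
    have hxlt : x e < y e := by
      rw [hye]; exact lt_of_le_of_ne (hxb e) hnb
    -- worker side
    have heS' : e ∈ workerEdges worker (worker e) := by simp [workerEdges]
    have hxwe := hxw e
    rw [chooseOn] at hxwe
    split at hxwe
    · rename_i hov
      set s := cutOf (workerEdges worker (worker e)) (qW (worker e)) y with hs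
      have hxe' : ∀ e' ∈ workerEdges worker (worker e), x e' = min s (y e') := by
        intro e' he'
        have hwe : worker e' = worker e := by simpa [workerEdges] using he'
        rw [hxw e']; simp only [hwe]; rw [chooseOn, if_pos hov]
      have hsum : ∑ e' ∈ workerEdges worker (worker e), x e' = qW (worker e) := by
        rw [Finset.sum_congr rfl hxe']
        exact cutOf_spec _ _ _ hov
      have hxwe' : x e = min s (y e) := hxwe
      have hxes : x e = s := by
        rcases min_cases s (y e) with ⟨hm, _⟩ | ⟨hm, _⟩
        · rw [hm] at hxwe'; exact hxwe'
        · rw [hm] at hxwe'; exact absurd hxwe' hxlt.ne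
      have hsup : (workerEdges worker (worker e)).sup x ≤ x e := by
        refine Finset.sup_le fun e' he' => ?_
        rw [hxe' e' he', hxes]; exact min_le_left _ _
      left
      exact ⟨heS', hsum, le_antisymm (Finset.le_sup heS') hsup⟩
    · have hxwe' : x e = y e := hxwe
      rw [hxwe'] at hxlt; exact absurd rfl hxlt.ne

end Market

/-- In the diversifying bipartite market `(G, b, q)` the set of
stable assignments is nonempty. -/
theorem stable_exists_bipartite {E F W : Type*} [Fintype E] [Fintype F] [Fintype W]
    (firm : E → F) (worker : E → W) (b : E → ℝ≥0) (qF : F → ℝ≥0) (qW : W → ℝ≥0) :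
    ∃ x : E → ℝ≥0, StableBip firm worker b qF qW x :=
  stable_exists_bipartite' firm worker b qF qW
end

section
/- Polarity of the two sides: if x and y are stable assignments of the diversifying bipartite market such that x_i ⪰ y_i for all firms i ∈ F, then y_j ⪰ x_j for all workers j ∈ W. -/
open scoped NNReal

attribute [local instance] Classical.propDecidable

lemma rational_sum_le {E : Type*} {S : Finset E} {q : ℝ≥0} {x : E → ℝ≥0}
    (h : IsDivChoiceOn S q x x) : (∑ e ∈ S, x e) ≤ q := by
  rcases h with ⟨h, _⟩ | ⟨h1, r, h2, h3⟩
  · exact h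
  · exfalso
    have hs : (∑ e ∈ S, x e) = ∑ e ∈ S, min r (x e) :=
      Finset.sum_congr rfl fun e he => h3 e he
    rw [hs, h2] at h1
    exact lt_irrefl _ h1

lemma key_not_firm_head {E F : Type*} [Fintype E] (firm : E → F)
    (qF : F → ℝ≥0) (x y : E → ℝ≥0)
    (hF : ∀ i : F, IsDivChoiceOn (firmEdges firm i) (qF i) (fun e => max (x e) (y e)) x)
    {e : E} (hlt : y e < x e) :
    e ∉ headOn (firmEdges firm (firm e)) (qF (firm e)) y := by
  intro hmem
  obtain ⟨heT, hsum, hsup⟩ := hmem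
  set i := firm e with hi
  set T := firmEdges firm i with hT
  rcases hF i with ⟨hz, hzeq⟩ | ⟨hz, r, hr, hreq⟩
  · -- first branch: x = max x y on T, so y ≤ x on T with equality of sums forces y e = max
    have hyz : ∀ f ∈ T, y f ≤ max (x f) (y f) := fun f _ => le_max_right _ _
    have hge : qF i ≤ ∑ f ∈ T, max (x f) (y f) := hsum ▸ Finset.sum_le_sum hyz
    have h1 : (∑ f ∈ T, max (x f) (y f)) = qF i := le_antisymm hz hge
    have heq := (Finset.sum_eq_sum_iff_of_le hyz).mp (by rw [h1, hsum]) e heT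
    have : x e ≤ y e := le_of_max_le_left (le_of_eq heq.symm)
    exact absurd hlt (not_lt.mpr this)
  · have hsumx : (∑ f ∈ T, x f) = qF i := by
      rw [← hr]; exact Finset.sum_congr rfl fun f hf => hreq f hf
    have hyler : ∀ f ∈ T, y f ≤ r := by
      intro f hf
      calc y f ≤ T.sup y := Finset.le_sup hf
        _ = y e := hsup.symm
        _ ≤ x e := hlt.le
        _ = min r (max (x e) (y e)) := hreq e heT
        _ ≤ r := min_le_left _ _
    have hxgey : ∀ f ∈ T, y f ≤ x f := by
      intro f hf
      rw [hreq f hf]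
      exact le_min (hyler f hf) (le_max_right _ _)
    have hcon : qF i < qF i := by
      calc qF i = ∑ f ∈ T, y f := hsum.symm
        _ < ∑ f ∈ T, x f := Finset.sum_lt_sum hxgey ⟨e, heT, hlt⟩
        _ = qF i := hsumx
    exact lt_irrefl _ hcon

/-- Polarity of the two sides: if `x` and `y` are stable assignments
such that `x_i ⪰ y_i` (i.e. `C_i(x_i ∨ y_i) = x_i`) for all firms `i ∈ F`, then
`y_j ⪰ x_j` (i.e. `C_j(y_j ∨ x_j) = y_j`) for all workers `j ∈ W`. -/
theorem stable_polarity {E F W : Type*} [Fintype E] [Fintype F] [Fintype W]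
    (firm : E → F) (worker : E → W) (b : E → ℝ≥0) (qF : F → ℝ≥0) (qW : W → ℝ≥0)
    (x y : E → ℝ≥0)
    (hx : StableBip firm worker b qF qW x) (hy : StableBip firm worker b qF qW y)
    (hF : ∀ i : F, IsDivChoiceOn (firmEdges firm i) (qF i) (fun e => max (x e) (y e)) x) :
    ∀ j : W, IsDivChoiceOn (workerEdges worker j) (qW j) (fun e => max (x e) (y e)) y := by
  obtain ⟨hxb, hxF, hxW, hxS⟩ := hx
  obtain ⟨hyb, hyF, hyW, hyS⟩ := hy
  intro j
  set S := workerEdges worker j with hS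
  -- key worker fact: an edge where x exceeds y must be in the head of y at its worker
  have hw : ∀ e ∈ S, y e < x e → (∑ f ∈ S, y f) = qW j ∧ y e = S.sup y := by
    intro e heS hlt
    have hwj : worker e = j := by
      simpa [hS, workerEdges] using heS
    have hbe : y e < b e := lt_of_lt_of_le hlt (hxb e)
    have hnotfirm := key_not_firm_head firm qF x y hF hlt
    rcases hyS e with hsat | hsat
    · rcases hsat with hhead | hcap
      · exact absurd hhead hnotfirm
      · exact absurd hcap (ne_of_lt hbe)
    · rcases hsat with hhead | hcap
      · rw [hwj] at hhead
        obtain ⟨_, hsum, hsup⟩ := hhead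
        exact ⟨hsum, hsup⟩
      · exact absurd hcap (ne_of_lt hbe)
  by_cases hall : ∀ e ∈ S, x e ≤ y e
  · left
    constructor
    · calc (∑ e ∈ S, max (x e) (y e)) = ∑ e ∈ S, y e :=
            Finset.sum_congr rfl fun e he => max_eq_right (hall e he)
        _ ≤ qW j := rational_sum_le (hyW j)
    · intro e he
      exact (max_eq_right (hall e he)).symm
  · push_neg at hall
    obtain ⟨e0, he0S, hlt0⟩ := hall
    obtain ⟨hsum, _⟩ := hw e0 he0S hlt0
    have hmin : ∀ f ∈ S, min (S.sup y) (max (x f) (y f)) = y f := by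
      intro f hf
      by_cases hxy : x f ≤ y f
      · rw [max_eq_right hxy, min_eq_right (Finset.le_sup hf)]
      · have hxy' : y f < x f := lt_of_not_ge hxy
        obtain ⟨_, hsupf⟩ := hw f hf hxy'
        rw [max_eq_left hxy'.le, ← hsupf, min_eq_left hxy'.le]
    right
    refine ⟨?_, S.sup y, ?_, ?_⟩
    · calc qW j = ∑ f ∈ S, y f := hsum.symm
        _ < ∑ f ∈ S, max (x f) (y f) :=
            Finset.sum_lt_sum (fun f _ => le_max_right _ _)
              ⟨e0, he0S, lt_of_lt_of_le hlt0 (le_max_left _ _)⟩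
    · rw [← hsum]
      exact Finset.sum_congr rfl hmin
    · intro f hf
      exact (hmin f hf).symm
end

section
/- For any finite graph G = (V, E) (not necessarily bipartite) with edge capacities b : E → ℝ≥0, vertex quotas q : V → ℝ≥0, and diversifying choice functions at all vertices, there exists exactly one stable assignment. -/
open scoped NNReal

attribute [local instance] Classical.propDecidable

/-- The set of edges of the (finite, not necessarily bipartite) graph `G` incident to
the vertex `v`. -/
noncomputable def incEdges {V : Type*} [Fintype V] [DecidableEq V] (G : SimpleGraph V)
    [DecidableRel G.Adj] (v : V) : Finset G.edgeSet :=
  Finset.univ.filter fun e => v ∈ (e : Sym2 V)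

/-- A stable assignment of the diversifying market on an arbitrary finite graph `G`
with edge capacities `b` and vertex quotas `q`: an assignment `x` on the edges of `G`
is stable if it is admissible (`x ≤ b`), rational at every vertex (`C_v(x_v) = x_v`),
and has no blocking edge, i.e. every edge is satiated for at least one of its two
endpoints. -/
def StableGraph {V : Type*} [Fintype V] [DecidableEq V] (G : SimpleGraph V)
    [DecidableRel G.Adj] (b : G.edgeSet → ℝ≥0) (q : V → ℝ≥0)
    (x : G.edgeSet → ℝ≥0) : Prop :=
  (∀ e, x e ≤ b e) ∧
  (∀ v : V, IsDivChoiceOn (incEdges G v) (q v) x x) ∧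
  ∀ e : G.edgeSet, ∃ v ∈ (e : Sym2 V), satiatedOn (incEdges G v) (q v) b x e


open scoped ENNReal

section DivAux

variable {V : Type*} [Fintype V] [DecidableEq V] {G : SimpleGraph V} [DecidableRel G.Adj]

lemma mem_incEdges {v : V} {e : G.edgeSet} : e ∈ incEdges G v ↔ v ∈ (e : Sym2 V) := by
  simp [incEdges]

lemma exists_other {v : V} {e : G.edgeSet} (he : e ∈ incEdges G v) :
    ∃ u, u ≠ v ∧ (e : Sym2 V) = s(v, u) := by
  have hv : v ∈ (e : Sym2 V) := mem_incEdges.1 he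
  have hd : ¬ (e : Sym2 V).IsDiag := G.not_isDiag_of_mem_edgeSet e.2
  obtain ⟨a, c, hac⟩ : ∃ a c, (e : Sym2 V) = s(a, c) :=
    Sym2.ind (fun a c => ⟨a, c, rfl⟩) (e : Sym2 V)
  rw [hac] at hv hd ⊢
  rw [Sym2.mem_iff] at hv
  rw [Sym2.mk_isDiag_iff] at hd
  rcases hv with rfl | rfl
  · exact ⟨c, fun h => hd h.symm, rfl⟩
  · exact ⟨a, hd, Sym2.eq_swap⟩

noncomputable def tinf (t : V → ℝ≥0∞) : Sym2 V → ℝ≥0∞ :=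
  Sym2.lift ⟨fun u w => t u ⊓ t w, fun u w => inf_comm _ _⟩

lemma tinf_mk (t : V → ℝ≥0∞) (u w : V) : tinf t s(u, w) = t u ⊓ t w := rfl

noncomputable def xv (b : G.edgeSet → ℝ≥0) (t : V → ℝ≥0∞) (e : G.edgeSet) : ℝ≥0∞ :=
  (b e : ℝ≥0∞) ⊓ tinf t e

noncomputable def Sv (b : G.edgeSet → ℝ≥0) (t : V → ℝ≥0∞) (v : V) : ℝ≥0∞ :=
  ∑ e ∈ incEdges G v, xv b t e

noncomputable def lev (b : G.edgeSet → ℝ≥0) (q : V → ℝ≥0) (t : V → ℝ≥0∞) (v : V) : ℝ≥0∞ :=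
  sSup {r | Sv b (Function.update t v r) v ≤ (q v : ℝ≥0∞)}

lemma tinf_mono {t t' : V → ℝ≥0∞} (h : t ≤ t') (e : Sym2 V) : tinf t e ≤ tinf t' e := by
  induction e using Sym2.ind with
  | _ u w => exact inf_le_inf (h u) (h w)

lemma tinf_le_of_mem {t : V → ℝ≥0∞} {v : V} {e : Sym2 V} (h : v ∈ e) : tinf t e ≤ t v := by
  induction e using Sym2.ind with
  | _ u w =>
    rw [Sym2.mem_iff] at h
    rcases h with rfl | rfl
    · exact inf_le_left
    · exact inf_le_right

lemma xv_le_b (b : G.edgeSet → ℝ≥0) (t : V → ℝ≥0∞) (e : G.edgeSet) :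
    xv b t e ≤ (b e : ℝ≥0∞) := inf_le_left

lemma xv_ne_top (b : G.edgeSet → ℝ≥0) (t : V → ℝ≥0∞) (e : G.edgeSet) :
    xv b t e ≠ ⊤ := ne_top_of_le_ne_top ENNReal.coe_ne_top (xv_le_b b t e)

lemma xv_mono (b : G.edgeSet → ℝ≥0) {t t' : V → ℝ≥0∞} (h : t ≤ t') (e : G.edgeSet) :
    xv b t e ≤ xv b t' e := inf_le_inf le_rfl (tinf_mono h _)

lemma Sv_mono (b : G.edgeSet → ℝ≥0) {t t' : V → ℝ≥0∞} (h : t ≤ t') (v : V) :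
    Sv b t v ≤ Sv b t' v := Finset.sum_le_sum fun e _ => xv_mono b h e

lemma update_mono {t : V → ℝ≥0∞} (v : V) {r r' : ℝ≥0∞} (h : r ≤ r') :
    Function.update t v r ≤ Function.update t v r' := by
  intro w
  by_cases hw : w = v
  · subst hw; simpa using h
  · simp [Function.update_of_ne hw]

lemma update_le_self {t : V → ℝ≥0∞} {v : V} {r : ℝ≥0∞} (h : r ≤ t v) :
    Function.update t v r ≤ t := by
  intro w
  by_cases hw : w = v
  · subst hw; simpa using h
  · simp [Function.update_of_ne hw]

lemma xv_update {b : G.edgeSet → ℝ≥0} {t : V → ℝ≥0∞} {v u : V} {r : ℝ≥0∞} {e : G.edgeSet}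
    (hu : u ≠ v) (he : (e : Sym2 V) = s(v, u)) :
    xv b (Function.update t v r) e = (b e : ℝ≥0∞) ⊓ (r ⊓ t u) := by
  rw [xv, he, tinf_mk, Function.update_self, Function.update_of_ne hu]

lemma xv_update_le {b : G.edgeSet → ℝ≥0} {t : V → ℝ≥0∞} {v : V} {r : ℝ≥0∞} {e : G.edgeSet}
    (he : e ∈ incEdges G v) :
    xv b (Function.update t v r) e ≤ r := by
  obtain ⟨u, hu, hes⟩ := exists_other he
  rw [xv_update hu hes]
  exact le_trans inf_le_right inf_le_left


lemma min_add_bound (r δ c : ℝ≥0∞) : (r + δ) ⊓ c ≤ r ⊓ c + δ := by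
  rcases le_total c r with h | h
  · rw [inf_eq_right.2 h]
    exact le_add_of_le_of_nonneg inf_le_right (zero_le)
  · rw [inf_eq_left.2 h]
    exact inf_le_left

lemma inf_le_inf_add {x y : ℝ≥0∞} (a δ : ℝ≥0∞) (h : x ≤ y + δ) : a ⊓ x ≤ a ⊓ y + δ := by
  rcases le_total a y with hay | hya
  · calc a ⊓ x ≤ a := inf_le_left
      _ = a ⊓ y := (inf_eq_left.2 hay).symm
      _ ≤ a ⊓ y + δ := le_self_add
  · calc a ⊓ x ≤ x := inf_le_right
      _ ≤ y + δ := h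
      _ = a ⊓ y + δ := by rw [inf_eq_right.2 hya]

lemma Sv_lipschitz (b : G.edgeSet → ℝ≥0) (t : V → ℝ≥0∞) (v : V) (r δ : ℝ≥0∞) :
    Sv b (Function.update t v (r + δ)) v ≤
      Sv b (Function.update t v r) v + ((incEdges G v).card : ℝ≥0∞) * δ := by
  have hterm : ∀ e ∈ incEdges G v,
      xv b (Function.update t v (r + δ)) e ≤ xv b (Function.update t v r) e + δ := by
    intro e he
    obtain ⟨u, hu, hes⟩ := exists_other he
    rw [xv_update hu hes, xv_update hu hes]
    exact inf_le_inf_add _ _ (min_add_bound r δ (t u))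
  calc Sv b (Function.update t v (r + δ)) v
      ≤ ∑ e ∈ incEdges G v, (xv b (Function.update t v r) e + δ) :=
        Finset.sum_le_sum hterm
    _ = Sv b (Function.update t v r) v + ((incEdges G v).card : ℝ≥0∞) * δ := by
        rw [Finset.sum_add_distrib, Finset.sum_const, nsmul_eq_mul, Sv]

lemma lev_le_aux (b : G.edgeSet → ℝ≥0) (q : V → ℝ≥0) (t : V → ℝ≥0∞) (v : V)
    (h : lev b q t v ≠ ⊤) :
    Sv b (Function.update t v (lev b q t v)) v ≤ (q v : ℝ≥0∞) := by
  set s := lev b q t v with hs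
  set n : ℝ≥0∞ := ((incEdges G v).card : ℝ≥0∞) + 1 with hn
  have hn0 : n ≠ 0 := by simp [hn]
  have hntop : n ≠ ⊤ := by simp [hn]
  apply ENNReal.le_of_forall_pos_le_add
  intro ε hε _
  set ε' : ℝ≥0∞ := (ε : ℝ≥0∞) / n with hε'
  have hε'0 : 0 < ε' := ENNReal.div_pos (by exact_mod_cast hε.ne') hntop
  have hnε' : n * ε' ≤ (ε : ℝ≥0∞) := ENNReal.mul_div_le
  have hcard : ((incEdges G v).card : ℝ≥0∞) ≤ n := le_self_add
  rcases le_total s ε' with hse | hes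
  · -- small s: Sv ≤ card * s ≤ n * ε' ≤ ε
    have h1 : Sv b (Function.update t v s) v ≤ ((incEdges G v).card : ℝ≥0∞) * s := by
      rw [Sv]
      calc ∑ e ∈ incEdges G v, xv b (Function.update t v s) e
          ≤ ∑ _e ∈ incEdges G v, s := Finset.sum_le_sum fun e he => xv_update_le he
        _ = ((incEdges G v).card : ℝ≥0∞) * s := by rw [Finset.sum_const, nsmul_eq_mul]
    calc Sv b (Function.update t v s) v ≤ ((incEdges G v).card : ℝ≥0∞) * s := h1
      _ ≤ n * ε' := mul_le_mul' hcard hse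
      _ ≤ (ε : ℝ≥0∞) := hnε'
      _ ≤ (q v : ℝ≥0∞) + ε := le_add_self
  · -- ε' ≤ s : approximate from below
    have hs0 : s ≠ 0 := fun h0 => by
      rw [h0] at hes; exact absurd (le_antisymm hes (zero_le)) hε'0.ne'
    have hsub : s - ε' < s := ENNReal.sub_lt_self h hs0 hε'0.ne'
    obtain ⟨rr, hrr, hrrlt⟩ := lt_sSup_iff.1
      (show s - ε' < sSup {r | Sv b (Function.update t v r) v ≤ (q v : ℝ≥0∞)} from hsub)
    have hsle : s ≤ rr + ε' := by
      have := hrrlt.le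
      exact tsub_le_iff_right.1 this
    calc Sv b (Function.update t v s) v
        ≤ Sv b (Function.update t v (rr + ε')) v := Sv_mono b (update_mono v hsle) v
      _ ≤ Sv b (Function.update t v rr) v + ((incEdges G v).card : ℝ≥0∞) * ε' :=
          Sv_lipschitz b t v rr ε'
      _ ≤ (q v : ℝ≥0∞) + n * ε' := add_le_add hrr (mul_le_mul' hcard le_rfl)
      _ ≤ (q v : ℝ≥0∞) + ε := add_le_add le_rfl hnε'

lemma lev_eq_aux (b : G.edgeSet → ℝ≥0) (q : V → ℝ≥0) (t : V → ℝ≥0∞) (v : V)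
    (h : lev b q t v ≠ ⊤) :
    Sv b (Function.update t v (lev b q t v)) v = (q v : ℝ≥0∞) := by
  set s := lev b q t v with hs
  have hle := lev_le_aux b q t v h
  refine le_antisymm hle ?_
  by_contra hq
  push_neg at hq
  set S₀ := Sv b (Function.update t v s) v with hS₀
  set n : ℝ≥0∞ := ((incEdges G v).card : ℝ≥0∞) + 1 with hn
  have hntop : n ≠ ⊤ := by simp [hn]
  set δ : ℝ≥0∞ := ((q v : ℝ≥0∞) - S₀) / n with hδ
  have hδ0 : δ ≠ 0 := by
    apply (ENNReal.div_pos (fun h0 => ?_) hntop).ne'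
    exact absurd (tsub_eq_zero_iff_le.1 h0) (not_le.2 hq)
  have hmem : Sv b (Function.update t v (s + δ)) v ≤ (q v : ℝ≥0∞) := by
    calc Sv b (Function.update t v (s + δ)) v
        ≤ S₀ + ((incEdges G v).card : ℝ≥0∞) * δ := Sv_lipschitz b t v s δ
      _ ≤ S₀ + n * δ := add_le_add le_rfl (mul_le_mul' le_self_add le_rfl)
      _ ≤ S₀ + ((q v : ℝ≥0∞) - S₀) := add_le_add le_rfl ENNReal.mul_div_le
      _ = (q v : ℝ≥0∞) := add_tsub_cancel_of_le hle
  have : s + δ ≤ s := le_sSup hmem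
  exact absurd this (not_le.2 (ENNReal.lt_add_right h hδ0))

lemma lev_top_aux (b : G.edgeSet → ℝ≥0) (q : V → ℝ≥0) (t : V → ℝ≥0∞) (v : V)
    (h : lev b q t v = ⊤) :
    Sv b (Function.update t v ⊤) v ≤ (q v : ℝ≥0∞) := by
  set B : ℝ≥0 := (incEdges G v).sup (fun e => b e) with hB
  have hlt : (B : ℝ≥0∞) < sSup {r | Sv b (Function.update t v r) v ≤ (q v : ℝ≥0∞)} := by
    rw [show sSup {r | Sv b (Function.update t v r) v ≤ (q v : ℝ≥0∞)} = lev b q t v from rfl, h]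
    exact ENNReal.coe_lt_top
  obtain ⟨rr, hrr, hBrr⟩ := lt_sSup_iff.1 hlt
  refine le_trans (le_of_eq ?_) hrr
  rw [Sv, Sv]
  refine Finset.sum_congr rfl fun e he => ?_
  obtain ⟨u, hu, hes⟩ := exists_other he
  rw [xv_update hu hes, xv_update hu hes]
  have hbe : (b e : ℝ≥0∞) ≤ rr := by
    refine le_trans ?_ hBrr.le
    exact_mod_cast Finset.le_sup (f := fun e => b e) he
  rw [top_inf_eq, ← inf_assoc, inf_eq_left.2 hbe]

lemma lev_antitone (b : G.edgeSet → ℝ≥0) (q : V → ℝ≥0) {t t' : V → ℝ≥0∞} (h : t ≤ t') (v : V) :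
    lev b q t' v ≤ lev b q t v := by
  apply sSup_le_sSup
  intro r hr
  exact le_trans (Sv_mono b (fun w => by
    by_cases hw : w = v
    · subst hw; simp
    · simp [Function.update_of_ne hw, h w]) v) hr


lemma build (b : G.edgeSet → ℝ≥0) (q : V → ℝ≥0) (A : Finset V) :
    ∀ t : V → ℝ≥0∞,
      (∀ v ∈ A, t v = ⊤) →
      (∀ v, v ∉ A → t v ≠ ⊤ ∧ Sv b t v = (q v : ℝ≥0∞)) →
      (∀ v, v ∉ A → ∀ u ∈ A, t v ≤ lev b q t u) →
      ∃ t' : V → ℝ≥0∞,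
        (∀ v, Sv b t' v ≤ (q v : ℝ≥0∞)) ∧ (∀ v, t' v ≠ ⊤ → Sv b t' v = (q v : ℝ≥0∞)) := by
  induction A using Finset.strongInduction with
  | _ A ih =>
    intro t h1 h2 h3
    by_cases hstop : ∀ u ∈ A, lev b q t u = ⊤
    · refine ⟨t, ?_, ?_⟩
      · intro v
        by_cases hv : v ∈ A
        · have htop := lev_top_aux b q t v (hstop v hv)
          rwa [show (⊤ : ℝ≥0∞) = t v from (h1 v hv).symm, Function.update_eq_self] at htop
        · exact (h2 v hv).2.le
      · intro v hvt
        by_cases hv : v ∈ A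
        · exact absurd (h1 v hv) hvt
        · exact (h2 v hv).2
    · push_neg at hstop
      obtain ⟨u₀, hu₀A, hu₀⟩ := hstop
      obtain ⟨u, huA, humin⟩ := Finset.exists_min_image A (lev b q t) ⟨u₀, hu₀A⟩
      set ℓ := lev b q t u with hℓ
      have hℓtop : ℓ ≠ ⊤ := fun htop => hu₀ (top_le_iff.1 (htop ▸ humin u₀ hu₀A))
      set t₂ := Function.update t u ℓ with ht₂
      have ht₂le : t₂ ≤ t := update_le_self (by rw [h1 u huA]; exact le_top)
      have hSu : Sv b t₂ u = (q u : ℝ≥0∞) := lev_eq_aux b q t u hℓtop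
      have hfr : ∀ v, v ∉ A → Sv b t₂ v = Sv b t v := by
        intro v hv
        refine Finset.sum_congr rfl fun e he => ?_
        obtain ⟨w, hwv, hes⟩ := exists_other he
        have hvu : v ≠ u := fun h => hv (h ▸ huA)
        rw [xv, xv, hes, tinf_mk, tinf_mk, ht₂]
        rw [Function.update_of_ne hvu]
        by_cases hwu : w = u
        · subst hwu
          rw [Function.update_self, h1 w huA, inf_top_eq,
            inf_eq_left.2 (h3 v hv w huA)]
        · rw [Function.update_of_ne hwu]
      apply ih (A.erase u) (Finset.erase_ssubset huA) t₂
      · intro v hv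
        rw [ht₂, Function.update_of_ne (Finset.ne_of_mem_erase hv)]
        exact h1 v (Finset.mem_of_mem_erase hv)
      · intro v hv
        by_cases hvu : v = u
        · subst hvu
          refine ⟨?_, hSu⟩
          rw [ht₂, Function.update_self]; exact hℓtop
        · have hvA : v ∉ A := fun hA => hv (Finset.mem_erase.2 ⟨hvu, hA⟩)
          refine ⟨?_, (hfr v hvA).trans (h2 v hvA).2⟩
          rw [ht₂, Function.update_of_ne hvu]
          exact (h2 v hvA).1
      · intro v hv u' hu'
        have hu'A : u' ∈ A := Finset.mem_of_mem_erase hu'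
        have hu'u : u' ≠ u := Finset.ne_of_mem_erase hu'
        have hlev2 : lev b q t u' ≤ lev b q t₂ u' := lev_antitone b q ht₂le u'
        by_cases hvu : v = u
        · subst hvu
          rw [ht₂, Function.update_self]
          exact le_trans (humin u' hu'A) hlev2
        · have hvA : v ∉ A := fun hA => hv (Finset.mem_erase.2 ⟨hvu, hA⟩)
          rw [ht₂, Function.update_of_ne hvu]
          exact le_trans (h3 v hvA u' hu'A) hlev2

lemma exists_good_t (b : G.edgeSet → ℝ≥0) (q : V → ℝ≥0) :
    ∃ t : V → ℝ≥0∞,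
      (∀ v, Sv b t v ≤ (q v : ℝ≥0∞)) ∧ (∀ v, t v ≠ ⊤ → Sv b t v = (q v : ℝ≥0∞)) := by
  apply build b q Finset.univ (fun _ => ⊤)
  · intro v _; rfl
  · intro v hv; exact absurd (Finset.mem_univ v) hv
  · intro v hv; exact absurd (Finset.mem_univ v) hv


lemma sum_le_of_choice {S : Finset G.edgeSet} {qv : ℝ≥0} {x : G.edgeSet → ℝ≥0}
    (h : IsDivChoiceOn S qv x x) : (∑ e ∈ S, x e) ≤ qv := by
  rcases h with ⟨h, _⟩ | ⟨hlt, r, hsum, hw⟩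
  · exact h
  · have : ∑ e ∈ S, min r (x e) = ∑ e ∈ S, x e :=
      Finset.sum_congr rfl fun e he => (hw e he).symm
    rw [this] at hsum
    exact absurd hsum hlt.ne'

lemma head_endpoint (b : G.edgeSet → ℝ≥0) (q : V → ℝ≥0) (t : V → ℝ≥0∞)
    (hgood : ∀ v, t v ≠ ⊤ → Sv b t v = (q v : ℝ≥0∞))
    (e : G.edgeSet) (u w : V) (hes : (e : Sym2 V) = s(u, w)) (huw : t u ≤ t w)
    (hlt : tinf t (e : Sym2 V) < (b e : ℝ≥0∞)) :
    u ∈ (e : Sym2 V) ∧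
      satiatedOn (incEdges G u) (q u) b (fun e' => (xv b t e').toNNReal) e := by
  have hmem : u ∈ (e : Sym2 V) := by rw [hes]; exact Sym2.mem_mk_left u w
  have heu : e ∈ incEdges G u := mem_incEdges.2 hmem
  have htinf : tinf t (e : Sym2 V) = t u := by rw [hes, tinf_mk]; exact inf_eq_left.2 huw
  have htu_lt : t u < (b e : ℝ≥0∞) := htinf ▸ hlt
  have htu_ne : t u ≠ ⊤ := ne_top_of_lt (lt_of_lt_of_le htu_lt le_top)
  have hsum := hgood u htu_ne
  have hcoe : ∀ e' : G.edgeSet, (((xv b t e').toNNReal : ℝ≥0∞)) = xv b t e' :=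
    fun e' => ENNReal.coe_toNNReal (xv_ne_top b t e')
  have hxe : xv b t e = t u := by
    rw [xv, htinf]; exact inf_eq_right.2 htu_lt.le
  refine ⟨hmem, Or.inl ⟨heu, ?_, ?_⟩⟩
  · -- sum equality
    have : ((∑ e' ∈ incEdges G u, (xv b t e').toNNReal : ℝ≥0) : ℝ≥0∞) = ((q u : ℝ≥0) : ℝ≥0∞) := by
      rw [ENNReal.coe_finset_sum]
      rw [Finset.sum_congr rfl fun e' _ => hcoe e']
      exact hsum
    exact_mod_cast this
  · -- sup equality
    show (xv b t e).toNNReal = (incEdges G u).sup fun e' => (xv b t e').toNNReal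
    refine le_antisymm (Finset.le_sup (f := fun e' => (xv b t e').toNNReal) heu) (Finset.sup_le fun e' he' => ?_)
    show (xv b t e').toNNReal ≤ (xv b t e).toNNReal
    rw [← ENNReal.coe_le_coe, hcoe, hcoe, hxe]
    exact le_trans inf_le_right (tinf_le_of_mem (mem_incEdges.1 he'))

lemma exists_stable (b : G.edgeSet → ℝ≥0) (q : V → ℝ≥0) :
    ∃ x : G.edgeSet → ℝ≥0, StableGraph G b q x := by
  obtain ⟨t, hle, heq⟩ := exists_good_t b q
  refine ⟨fun e => (xv b t e).toNNReal, ?_, ?_, ?_⟩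
  · intro e
    have : xv b t e ≤ (b e : ℝ≥0∞) := xv_le_b b t e
    rw [← ENNReal.coe_toNNReal (xv_ne_top b t e)] at this
    exact_mod_cast this
  · intro v
    left
    refine ⟨?_, fun e _ => rfl⟩
    have : ((∑ e' ∈ incEdges G v, (xv b t e').toNNReal : ℝ≥0) : ℝ≥0∞) ≤ ((q v : ℝ≥0) : ℝ≥0∞) := by
      rw [ENNReal.coe_finset_sum]
      rw [Finset.sum_congr rfl fun e' _ => ENNReal.coe_toNNReal (xv_ne_top b t e')]
      exact hle v
    exact_mod_cast this
  · intro e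
    obtain ⟨u, w, hes⟩ : ∃ u w, (e : Sym2 V) = s(u, w) :=
      Sym2.ind (fun a c => ⟨a, c, rfl⟩) (e : Sym2 V)
    by_cases hb : tinf t (e : Sym2 V) < (b e : ℝ≥0∞)
    · rcases le_total (t u) (t w) with huw | hwu
      · obtain ⟨hmem, hsat⟩ := head_endpoint b q t heq e u w hes huw hb
        exact ⟨u, hmem, hsat⟩
      · obtain ⟨hmem, hsat⟩ := head_endpoint b q t heq e w u (hes.trans Sym2.eq_swap) hwu hb
        exact ⟨w, hmem, hsat⟩
    · push_neg at hb
      refine ⟨u, by rw [hes]; exact Sym2.mem_mk_left u w, Or.inr ?_⟩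
      have h2 : xv b t e = (b e : ℝ≥0∞) := inf_eq_left.2 hb
      show (xv b t e).toNNReal = b e
      rw [h2]
      exact ENNReal.toNNReal_coe _

lemma no_min_diff (b : G.edgeSet → ℝ≥0) (q : V → ℝ≥0) {x y : G.edgeSet → ℝ≥0}
    (hx : StableGraph G b q x) (hy : StableGraph G b q y) (e₀ : G.edgeSet)
    (hlt : y e₀ < x e₀)
    (hmin : ∀ e, x e ≠ y e → max (x e₀) (y e₀) ≤ max (x e) (y e)) : False := by
  obtain ⟨hxb, hxr, _⟩ := hx
  obtain ⟨_, _, hys⟩ := hy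
  have h1 : y e₀ ≠ b e₀ := (hlt.trans_le (hxb e₀)).ne
  obtain ⟨v, _, hsat⟩ := hys e₀
  rcases hsat with hhead | hb
  swap
  · exact h1 hb
  obtain ⟨heS, hsum, hsup⟩ := hhead
  have hxsum : (∑ e ∈ incEdges G v, x e) ≤ q v := sum_le_of_choice (hxr v)
  have hex : ∃ e' ∈ incEdges G v, x e' < y e' := by
    by_contra hc
    push_neg at hc
    have : (∑ e ∈ incEdges G v, y e) < ∑ e ∈ incEdges G v, x e := by
      refine Finset.sum_lt_sum hc ⟨e₀, heS, hlt⟩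
    rw [hsum] at this
    exact absurd (this.trans_le hxsum) (lt_irrefl _)
  obtain ⟨e', he', hlt'⟩ := hex
  have hne' : x e' ≠ y e' := hlt'.ne
  have h2 := hmin e' hne'
  rw [max_eq_left hlt.le, max_eq_right hlt'.le] at h2
  have h3 : y e' ≤ y e₀ := hsup ▸ Finset.le_sup he'
  exact absurd ((h2.trans h3).trans_lt hlt) (lt_irrefl _)

lemma stable_unique_s16 (b : G.edgeSet → ℝ≥0) (q : V → ℝ≥0) {x y : G.edgeSet → ℝ≥0}
    (hx : StableGraph G b q x) (hy : StableGraph G b q y) : x = y := by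
  by_contra hne
  obtain ⟨e, he⟩ := Function.ne_iff.1 hne
  obtain ⟨e₀, he₀D, hmin⟩ := Finset.exists_min_image
    (Finset.univ.filter fun e => x e ≠ y e) (fun e => max (x e) (y e))
    ⟨e, Finset.mem_filter.2 ⟨Finset.mem_univ e, he⟩⟩
  have he₀ : x e₀ ≠ y e₀ := (Finset.mem_filter.1 he₀D).2
  have hmin' : ∀ e', x e' ≠ y e' → max (x e₀) (y e₀) ≤ max (x e') (y e') :=
    fun e' h => hmin e' (Finset.mem_filter.2 ⟨Finset.mem_univ e', h⟩)
  rcases he₀.lt_or_gt with h | h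
  · exact no_min_diff b q hy hx e₀ h
      (fun e' h' => by rw [max_comm (y e₀), max_comm (y e')]; exact hmin' e' (Ne.symm h'))
  · exact no_min_diff b q hx hy e₀ h hmin'

end DivAux

/-- For any finite graph `G = (V, E)` (not necessarily bipartite)
with edge capacities `b : E → ℝ≥0`, vertex quotas `q : V → ℝ≥0`, and diversifying
choice functions at all vertices, there exists exactly one stable assignment. -/
theorem stable_existsUnique_graph {V : Type*} [Fintype V] [DecidableEq V]
    (G : SimpleGraph V) [DecidableRel G.Adj] (b : G.edgeSet → ℝ≥0) (q : V → ℝ≥0) :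
    ∃! x : G.edgeSet → ℝ≥0, StableGraph G b q x := by
  obtain ⟨x, hx⟩ := exists_stable b q
  exact ⟨x, hx, fun y hy => stable_unique_s16 b q hy hx⟩
end

section
/- Hypergraph key property: assume E is nonempty and every vertex of the hypergraph H = (V, E) is incident to at least one hyperedge. For each v ∈ V let z_v = C_v(b|_{E_v}) and m_v = min_{e∈E_v} z_v(e); let m = min_{v∈V} m_v, and let e₀ be a hyperedge and v₀ ∈ e₀ a vertex with z_{v₀}(e₀) = m_{v₀} = m. Then every stable assignment x of (H, b, q) satisfies x(e₀) = m. -/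
open scoped NNReal

attribute [local instance] Classical.propDecidable

/-- The set `E_v` of hyperedges of the hypergraph (given by the incidence map
`inc : E → Finset V`, each hyperedge being a subset of `V`) containing vertex `v`. -/
noncomputable def vertEdges {V E : Type*} [Fintype E] (inc : E → Finset V) (v : V) :
    Finset E :=
  Finset.univ.filter fun e => v ∈ inc e

/-- A stable assignment of the diversifying market on a finite hypergraph `H = (V, E)`
(with hyperedge `e` having vertex set `inc e`), capacities `b` and quotas `q`: an
assignment `x : E → ℝ≥0` is stable if it is admissible (`x ≤ b`), rational at every
vertex (`C_v(x_v) = x_v`), and has no blocking hyperedge, i.e. every hyperedge is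
satiated for at least one of its vertices. -/
def StableHyp {V E : Type*} [Fintype E] (inc : E → Finset V) (b : E → ℝ≥0)
    (q : V → ℝ≥0) (x : E → ℝ≥0) : Prop :=
  (∀ e, x e ≤ b e) ∧
  (∀ v : V, IsDivChoiceOn (vertEdges inc v) (q v) x x) ∧
  ∀ e : E, ∃ v ∈ inc e, satiatedOn (vertEdges inc v) (q v) b x e

/-- Hypergraph key property: assume `E` is nonempty, every hyperedge
is nonempty, and every vertex is incident to at least one hyperedge. For each `v ∈ V`
let `z_v = C_v(b|_{E_v})` and `m_v = min_{e ∈ E_v} z_v(e)`; let `m = min_{v ∈ V} m_v`,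
and let `e₀` be a hyperedge and `v₀ ∈ e₀` a vertex with `z_{v₀}(e₀) = m_{v₀} = m`.
Then every stable assignment `x` of `(H, b, q)` satisfies `x(e₀) = m`. -/
theorem hypergraph_key_property {V E : Type*} [Fintype V] [Fintype E]
    (inc : E → Finset V) (b : E → ℝ≥0) (q : V → ℝ≥0)
    (hE : Nonempty E) (hedge : ∀ e, (inc e).Nonempty) (hvert : ∀ v : V, ∃ e : E, v ∈ inc e)
    (zc : V → E → ℝ≥0) (hzc : ∀ v : V, IsDivChoiceOn (vertEdges inc v) (q v) b (zc v))
    (mv : V → ℝ≥0) (hmv : ∀ v : V, mv v = sInf (zc v '' (vertEdges inc v : Set E)))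
    (m : ℝ≥0) (hm : m = sInf (Set.range mv))
    (e₀ : E) (v₀ : V) (hv₀ : v₀ ∈ inc e₀) (he₀ : zc v₀ e₀ = mv v₀) (hm₀ : mv v₀ = m) :
    ∀ x : E → ℝ≥0, StableHyp inc b q x → x e₀ = m := by
  intro x hx
  obtain ⟨hxb, hrat, hstab⟩ := hx
  -- rationality implies sums bounded by quota
  have hSq : ∀ v : V, (∑ e ∈ vertEdges inc v, x e) ≤ q v := by
    intro v
    rcases hrat v with ⟨h, _⟩ | ⟨hlt, r, hr, hxr⟩
    · exact h
    · exfalso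
      have : (∑ e ∈ vertEdges inc v, x e) = q v := by
        rw [← hr]; exact Finset.sum_congr rfl hxr
      exact absurd hlt (not_lt.mpr this.le)
  have hmemS : ∀ v : V, ∀ e : E, e ∈ vertEdges inc v ↔ v ∈ inc e := by
    intro v e; simp [vertEdges]
  have hm_le_zc : ∀ v : V, ∀ e ∈ vertEdges inc v, m ≤ zc v e := by
    intro v e he
    calc m = sInf (Set.range mv) := hm
      _ ≤ mv v := csInf_le' ⟨v, rfl⟩
      _ = sInf (zc v '' (vertEdges inc v : Set E)) := hmv v
      _ ≤ zc v e := csInf_le' ⟨e, by simpa using he, rfl⟩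
  have hzc_le_b : ∀ v : V, ∀ e ∈ vertEdges inc v, zc v e ≤ b e := by
    intro v e he
    rcases hzc v with ⟨_, h⟩ | ⟨_, r, _, h⟩
    · exact (h e he).le
    · rw [h e he]; exact min_le_right _ _
  have hsum_zc : ∀ v : V, (∑ e ∈ vertEdges inc v, zc v e) ≤ q v := by
    intro v
    rcases hzc v with ⟨hle, h⟩ | ⟨_, r, hr, h⟩
    · calc (∑ e ∈ vertEdges inc v, zc v e) = ∑ e ∈ vertEdges inc v, b e :=
            Finset.sum_congr rfl h
        _ ≤ q v := hle
    · rw [Finset.sum_congr rfl h, hr]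
  -- Claim 1: every edge gets at least m
  have hle_x : ∀ e : E, m ≤ x e := by
    intro e
    by_contra hc
    push_neg at hc
    obtain ⟨v, hv, hsat⟩ := hstab e
    have heS : e ∈ vertEdges inc v := (hmemS v e).mpr hv
    have hxlb : x e < b e := hc.trans_le ((hm_le_zc v e heS).trans (hzc_le_b v e heS))
    rcases hsat with ⟨heS', hsum, hmax⟩ | hcap
    · have hstrict : (∑ e' ∈ vertEdges inc v, x e') < ∑ e' ∈ vertEdges inc v, zc v e' := by
        refine Finset.sum_lt_sum_of_nonempty ⟨e, heS⟩ ?_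
        intro e' he'
        calc x e' ≤ (vertEdges inc v).sup x := Finset.le_sup he'
          _ = x e := hmax.symm
          _ < m := hc
          _ ≤ zc v e' := hm_le_zc v e' he'
      have : q v < q v := by
        calc q v = ∑ e' ∈ vertEdges inc v, x e' := hsum.symm
          _ < ∑ e' ∈ vertEdges inc v, zc v e' := hstrict
          _ ≤ q v := hsum_zc v
      exact lt_irrefl _ this
    · exact hxlb.ne hcap
  -- Claim 2: x e₀ ≤ m
  have heS₀ : e₀ ∈ vertEdges inc v₀ := (hmemS v₀ e₀).mpr hv₀
  have hze : zc v₀ e₀ = m := he₀.trans hm₀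
  have hub : x e₀ ≤ m := by
    rcases hzc v₀ with ⟨_, h⟩ | ⟨_, r, hr, h⟩
    · have hbe : b e₀ = m := (h e₀ heS₀).symm.trans hze
      exact (hxb e₀).trans hbe.le
    · have hmin : min r (b e₀) = m := (h e₀ heS₀).symm.trans hze
      rcases le_total (b e₀) r with hbr | hrb
      · have hbe : b e₀ = m := by rw [← hmin, min_eq_right hbr]
        exact (hxb e₀).trans hbe.le
      · have hrm : r = m := by rw [← hmin, min_eq_left hrb]
        by_contra hc
        push_neg at hc
        have hterm : ∀ e' ∈ vertEdges inc v₀, zc v₀ e' ≤ x e' := by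
          intro e' he'
          calc zc v₀ e' = min r (b e') := h e' he'
            _ ≤ r := min_le_left _ _
            _ = m := hrm
            _ ≤ x e' := hle_x e'
        have hstrict : (∑ e' ∈ vertEdges inc v₀, zc v₀ e') <
            ∑ e' ∈ vertEdges inc v₀, x e' := by
          refine Finset.sum_lt_sum hterm ⟨e₀, heS₀, ?_⟩
          rw [hze]; exact hc
        have hq : (∑ e' ∈ vertEdges inc v₀, zc v₀ e') = q v₀ := by
          rw [Finset.sum_congr rfl h, hr]
        have : q v₀ < q v₀ := by
          calc q v₀ = ∑ e' ∈ vertEdges inc v₀, zc v₀ e' := hq.symm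
            _ < ∑ e' ∈ vertEdges inc v₀, x e' := hstrict
            _ ≤ q v₀ := hSq v₀
        exact lt_irrefl _ this
  exact le_antisymm hub (hle_x e₀)
end

section
/- For any finite hypergraph H = (V, E) with capacities b : E → ℝ≥0, quotas q : V → ℝ≥0, and diversifying choice functions at all vertices, there exists exactly one stable assignment. -/
open scoped NNReal

attribute [local instance] Classical.propDecidable

/-- ε-approximation lemma in `ℝ≥0`. -/
lemma nnreal_le_of_forall_pos_le_add {a b : ℝ≥0} (h : ∀ ε : ℝ≥0, 0 < ε → a ≤ b + ε) :
    a ≤ b := by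
  by_contra hlt
  push_neg at hlt
  have hpos : 0 < a - b := tsub_pos_of_lt hlt
  have h2 := h ((a - b)/2) (div_pos hpos two_pos)
  rw [← NNReal.coe_le_coe] at h2
  push_cast [NNReal.coe_sub hlt.le] at h2
  have := NNReal.coe_lt_coe.mpr hlt
  linarith

lemma min_lip {r t c : ℝ≥0} (h : r ≤ t) : min t c ≤ min r c + (t - r) := by
  rcases le_total c r with hc | hc
  · simp [min_eq_right hc, min_eq_right (hc.trans h)]
  · rw [min_eq_left hc]
    calc min t c ≤ t := min_le_left _ _
    _ = r + (t - r) := (add_tsub_cancel_of_le h).symm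

section Water

variable {E : Type*}

lemma gmono {S : Finset E} {c : E → ℝ≥0} {r r' : ℝ≥0} (h : r ≤ r') :
    (∑ e ∈ S, min r (c e)) ≤ ∑ e ∈ S, min r' (c e) :=
  Finset.sum_le_sum fun e _ => min_le_min h le_rfl

lemma glip {S : Finset E} {c : E → ℝ≥0} {r t : ℝ≥0} (h : r ≤ t) :
    (∑ e ∈ S, min t (c e)) ≤ (∑ e ∈ S, min r (c e)) + S.card * (t - r) := by
  calc (∑ e ∈ S, min t (c e)) ≤ ∑ e ∈ S, (min r (c e) + (t - r)) :=
        Finset.sum_le_sum fun e _ => min_lip h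
  _ = (∑ e ∈ S, min r (c e)) + S.card * (t - r) := by
      rw [Finset.sum_add_distrib, Finset.sum_const, nsmul_eq_mul]

/-- The water-level cut at a single vertex: if `q < ∑_{e∈S} c e` then the
supremum `t` of `{r | ∑ min r (c e) ≤ q}` satisfies `∑ min t (c e) = q`. -/
lemma cut_level_eq {S : Finset E} {c : E → ℝ≥0} {qv : ℝ≥0}
    (hq : qv < ∑ e ∈ S, c e) :
    (∑ e ∈ S, min (sSup {r : ℝ≥0 | (∑ e ∈ S, min r (c e)) ≤ qv}) (c e)) = qv := by
  set T : Set ℝ≥0 := {r : ℝ≥0 | (∑ e ∈ S, min r (c e)) ≤ qv} with hT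
  have hTne : T.Nonempty := ⟨0, by simp [hT]⟩
  have hTbdd : BddAbove T := by
    refine ⟨S.sup c, fun r hr => ?_⟩
    by_contra hcon
    push_neg at hcon
    have : (∑ e ∈ S, c e) ≤ ∑ e ∈ S, min r (c e) := by
      refine Finset.sum_le_sum fun e he => ?_
      rw [min_eq_right ((Finset.le_sup he).trans hcon.le)]
    exact absurd (this.trans hr) (not_le.mpr hq)
  set t := sSup T with ht
  set N : ℝ≥0 := S.card + 1 with hN
  have hNpos : (0:ℝ≥0) < N := by positivity
  have hle : (∑ e ∈ S, min t (c e)) ≤ qv := by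
    refine nnreal_le_of_forall_pos_le_add fun ε hε => ?_
    set δ := ε / N with hδ
    have hδpos : 0 < δ := div_pos hε hNpos
    have hrT : t - δ ∈ T := by
      rcases eq_or_ne t 0 with h0 | h0
      · have : t - δ = 0 := by rw [h0, zero_tsub]
        rw [this]; simp [hT]
      · have hlt : t - δ < t := tsub_lt_self (lt_of_le_of_ne zero_le (Ne.symm h0)) hδpos
        obtain ⟨r', hr'T, hrr'⟩ := exists_lt_of_lt_csSup hTne hlt
        exact le_trans (gmono hrr'.le) hr'T
    calc (∑ e ∈ S, min t (c e))
        ≤ (∑ e ∈ S, min (t - δ) (c e)) + S.card * (t - (t - δ)) := glip tsub_le_self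
      _ ≤ qv + N * δ := by
          refine add_le_add hrT (mul_le_mul ?_ ?_ zero_le zero_le)
          · simp [hN]
          · rw [tsub_le_iff_right]; exact le_add_tsub
      _ ≤ qv + ε := by
          refine add_le_add_right ?_ qv
          rw [hδ, mul_div_cancel₀ _ (ne_of_gt hNpos)]
  have hge : qv ≤ ∑ e ∈ S, min t (c e) := by
    refine nnreal_le_of_forall_pos_le_add fun ε hε => ?_
    set δ := ε / N with hδ
    have hδpos : 0 < δ := div_pos hε hNpos
    have hnot : t + δ ∉ T := fun hmem =>
      absurd (le_csSup hTbdd hmem) (not_le.mpr (lt_add_of_pos_right t hδpos))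
    have hq2 : qv < ∑ e ∈ S, min (t + δ) (c e) := not_le.mp hnot
    calc qv ≤ ∑ e ∈ S, min (t + δ) (c e) := hq2.le
      _ ≤ (∑ e ∈ S, min t (c e)) + S.card * ((t + δ) - t) := glip le_self_add
      _ ≤ (∑ e ∈ S, min t (c e)) + ε := by
          refine add_le_add_right ?_ _
          rw [add_tsub_cancel_left]
          calc (S.card : ℝ≥0) * δ ≤ N * δ := by
                refine mul_le_mul ?_ le_rfl zero_le zero_le
                simp [hN]
            _ = ε := by rw [hδ, mul_div_cancel₀ _ (ne_of_gt hNpos)]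
  exact le_antisymm hle hge
end Water
/-- The water-filling recursion: given remaining vertices `A`, current capacities `c`,
and a floor level `r₀` at which no remaining vertex is over quota, there is an
assignment `x ≤ c` cutting only at levels `≥ r₀`, keeping every `v ∈ A` within quota,
such that every edge is either uncut or is a top edge of some tight vertex of `A`. -/
lemma water_rec {V E : Type*} (S : V → Finset E) (q : V → ℝ≥0) :
    ∀ (n : ℕ) (A : Finset V), A.card ≤ n → ∀ (c : E → ℝ≥0) (r₀ : ℝ≥0),
      (∀ v ∈ A, (∑ e ∈ S v, min r₀ (c e)) ≤ q v) →
      ∃ x : E → ℝ≥0, (∀ e, x e ≤ c e) ∧ (∀ e, min r₀ (c e) ≤ x e) ∧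
        (∀ v ∈ A, (∑ e ∈ S v, x e) ≤ q v) ∧
        (∀ e, x e = c e ∨ ∃ v ∈ A, e ∈ S v ∧ (∑ e' ∈ S v, x e') = q v ∧
          ∀ e' ∈ S v, x e' ≤ x e) := by
  intro n
  induction n with
  | zero =>
    intro A hA c r₀ _
    have hA0 : A = ∅ := Finset.card_eq_zero.mp (Nat.le_zero.mp hA)
    subst hA0
    exact ⟨c, fun e => le_rfl, fun e => min_le_right _ _, by simp, fun e => Or.inl rfl⟩
  | succ m ih =>
    intro A hA c r₀ hI
    by_cases hall : ∀ v ∈ A, (∑ e ∈ S v, c e) ≤ q v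
    · exact ⟨c, fun e => le_rfl, fun e => min_le_right _ _, hall, fun e => Or.inl rfl⟩
    push_neg at hall
    obtain ⟨w, hwA, hw⟩ := hall
    set B : Finset V := A.filter (fun v => q v < ∑ e ∈ S v, c e) with hB
    have hBne : B.Nonempty := ⟨w, Finset.mem_filter.mpr ⟨hwA, hw⟩⟩
    set t : V → ℝ≥0 := fun v => sSup {r : ℝ≥0 | (∑ e ∈ S v, min r (c e)) ≤ q v} with htdef
    have ht_eq : ∀ v ∈ B, (∑ e ∈ S v, min (t v) (c e)) = q v := fun v hv =>
      cut_level_eq (Finset.mem_filter.mp hv).2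
    obtain ⟨vs, hvsB, hvsmin⟩ := B.exists_min_image t hBne
    have hvsA : vs ∈ A := (Finset.mem_filter.mp hvsB).1
    set rs := t vs with hrs
    -- the floor level is below the new cut level
    have hTbdd : BddAbove {r : ℝ≥0 | (∑ e ∈ S vs, min r (c e)) ≤ q vs} := by
      refine ⟨(S vs).sup c, fun r hr => ?_⟩
      by_contra hcon
      push_neg at hcon
      have hcc : (∑ e ∈ S vs, c e) ≤ ∑ e ∈ S vs, min r (c e) :=
        Finset.sum_le_sum fun e he => le_of_eq
          (min_eq_right ((Finset.le_sup he).trans hcon.le)).symm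
      exact absurd (hcc.trans hr) (not_le.mpr (Finset.mem_filter.mp hvsB).2)
    have hr0 : r₀ ≤ rs := le_csSup hTbdd (hI vs hvsA)
    -- all remaining vertices are within quota at level `rs`
    have hgA : ∀ v ∈ A, (∑ e ∈ S v, min rs (c e)) ≤ q v := by
      intro v hv
      by_cases hvB : v ∈ B
      · exact le_trans (gmono (hvsmin v hvB)) (le_of_eq (ht_eq v hvB))
      · have : ¬ q v < ∑ e ∈ S v, c e := fun hcon =>
          hvB (Finset.mem_filter.mpr ⟨hv, hcon⟩)
        exact le_trans (Finset.sum_le_sum fun e _ => min_le_right _ _) (not_lt.mp this)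
    -- cut the capacities of the edges at `vs`
    set c' : E → ℝ≥0 := fun e => if e ∈ S vs then min (c e) rs else c e with hc'
    have hc'le : ∀ e, c' e ≤ c e := by
      intro e; simp only [hc']
      split
      · exact min_le_left _ _
      · exact le_rfl
    have hminc' : ∀ e, min rs (c' e) = min rs (c e) := by
      intro e; simp only [hc']
      split
      · rw [min_comm (c e) rs, ← min_assoc, min_self]
      · rfl
    have hcard : (A.erase vs).card ≤ m := by
      have := Finset.card_erase_of_mem hvsA
      omega
    obtain ⟨x, hx1, hx2, hx3, hx4⟩ := ih (A.erase vs) hcard c' rs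
      (fun v hv => le_trans (by rw [Finset.sum_congr rfl fun e _ => hminc' e])
        (hgA v (Finset.mem_of_mem_erase hv)))
    -- on the edges of `vs`, `x` equals the cut capacity exactly
    have hxstar : ∀ e ∈ S vs, x e = min (c e) rs := by
      intro e he
      refine le_antisymm (le_trans (hx1 e) (by simp only [hc', if_pos he]; exact le_rfl)) ?_
      have := hx2 e
      rw [hminc' e, min_comm] at this
      exact this
    have htight : (∑ e ∈ S vs, x e) = q vs := by
      rw [Finset.sum_congr rfl hxstar, Finset.sum_congr rfl fun e _ => min_comm (c e) rs]
      exact ht_eq vs hvsB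
    refine ⟨x, fun e => (hx1 e).trans (hc'le e), ?_, ?_, ?_⟩
    · intro e
      exact le_trans (le_trans (min_le_min hr0 le_rfl) (le_of_eq (hminc' e).symm)) (hx2 e)
    · intro v hv
      by_cases hvvs : v = vs
      · rw [hvvs]; exact le_of_eq htight
      · exact hx3 v (Finset.mem_erase.mpr ⟨hvvs, hv⟩)
    · intro e
      rcases hx4 e with h | ⟨v, hvA', heS, hsum, hle⟩
      · by_cases heS : e ∈ S vs
        · by_cases hcut : c e ≤ rs
          · left; rw [h]; simp only [hc', if_pos heS]; exact min_eq_left hcut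
          · right
            refine ⟨vs, hvsA, heS, htight, fun e' he' => ?_⟩
            rw [hxstar e' he', h]
            simp only [hc', if_pos heS]
            rw [min_eq_right (not_le.mp hcut).le]
            exact min_le_right _ _
        · left; rw [h]; simp only [hc', if_neg heS]
      · exact Or.inr ⟨v, Finset.mem_of_mem_erase hvA', heS, hsum, hle⟩
lemma IsDivChoiceOn.sum_le' {E : Type*} {S : Finset E} {qv : ℝ≥0} {x : E → ℝ≥0}
    (h : IsDivChoiceOn S qv x x) : (∑ e ∈ S, x e) ≤ qv := by
  rcases h with ⟨h, _⟩ | ⟨h, r, hr, hx⟩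
  · exact h
  · have heq : (∑ e ∈ S, x e) = qv := by rw [Finset.sum_congr rfl hx]; exact hr
    rw [heq] at h
    exact absurd h (lt_irrefl qv)

lemma mem_vertEdges {V E : Type*} [Fintype E] {inc : E → Finset V} {v : V} {e : E} :
    e ∈ vertEdges inc v ↔ v ∈ inc e := by
  simp [vertEdges]

/-- One step of the uniqueness argument. -/
lemma stable_step {V E : Type*} [Fintype E] {inc : E → Finset V} {b : E → ℝ≥0}
    {q : V → ℝ≥0} {x y : E → ℝ≥0} (hx : StableHyp inc b q x) (hy : StableHyp inc b q y)
    {e : E} (hlt : y e < x e)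
    (hmin : ∀ e', x e' ≠ y e' → max (x e) (y e) ≤ max (x e') (y e')) : False := by
  obtain ⟨v, hv, hsat⟩ := hy.2.2 e
  rcases hsat with hhead | hcap
  · obtain ⟨heS, hsum, hsup⟩ := hhead
    have hxsum : (∑ e' ∈ vertEdges inc v, x e') ≤ q v := (hx.2.1 v).sum_le'
    have hkey : ∃ e' ∈ vertEdges inc v, x e' < y e' := by
      by_contra hcon
      push_neg at hcon
      have : (∑ e' ∈ vertEdges inc v, y e') < ∑ e' ∈ vertEdges inc v, x e' :=
        Finset.sum_lt_sum hcon ⟨e, heS, hlt⟩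
      rw [hsum] at this
      exact absurd (this.trans_le hxsum) (lt_irrefl (q v))
    obtain ⟨e', he'S, hlt'⟩ := hkey
    have h1 : max (x e) (y e) ≤ max (x e') (y e') := hmin e' (ne_of_lt hlt')
    rw [max_eq_right hlt'.le] at h1
    have h2 : y e' ≤ y e := by rw [hsup]; exact Finset.le_sup he'S
    exact absurd ((le_max_left (x e) (y e)).trans (h1.trans h2)) (not_le.mpr hlt)
  · exact absurd hcap (ne_of_lt (hlt.trans_le (hx.1 e)))

lemma stable_unique_s19 {V E : Type*} [Fintype E] {inc : E → Finset V} {b : E → ℝ≥0}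
    {q : V → ℝ≥0} {x y : E → ℝ≥0} (hx : StableHyp inc b q x) (hy : StableHyp inc b q y) :
    x = y := by
  by_contra hne
  have hDne : (Finset.univ.filter fun e => x e ≠ y e).Nonempty := by
    obtain ⟨e, he⟩ := Function.ne_iff.mp hne
    exact ⟨e, Finset.mem_filter.mpr ⟨Finset.mem_univ e, he⟩⟩
  obtain ⟨e, heD, hemin⟩ := Finset.exists_min_image _ (fun e => max (x e) (y e)) hDne
  have hexy : x e ≠ y e := (Finset.mem_filter.mp heD).2
  have hmin : ∀ e', x e' ≠ y e' → max (x e) (y e) ≤ max (x e') (y e') := fun e' h =>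
    hemin e' (Finset.mem_filter.mpr ⟨Finset.mem_univ e', h⟩)
  rcases lt_or_gt_of_ne hexy with h | h
  · exact stable_step hy hx h fun e' hne' => by
      rw [max_comm (y e) (x e), max_comm (y e') (x e')]
      exact hmin e' (Ne.symm hne')
  · exact stable_step hx hy h hmin

/-- For any finite hypergraph `H = (V, E)` (each hyperedge being a
nonempty subset of `V`) with capacities `b : E → ℝ≥0`, quotas `q : V → ℝ≥0`, and
diversifying choice functions at all vertices, there exists exactly one stable
assignment. -/
theorem stable_existsUnique_hypergraph {V E : Type*} [Fintype V] [Fintype E]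
    (inc : E → Finset V) (hedge : ∀ e, (inc e).Nonempty)
    (b : E → ℝ≥0) (q : V → ℝ≥0) :
    ∃! x : E → ℝ≥0, StableHyp inc b q x := by
  obtain ⟨x, hx1, _, hx3, hx4⟩ := water_rec (vertEdges inc) q
    (Finset.univ : Finset V).card Finset.univ le_rfl b 0
    (fun v _ => by
      have h0 : (∑ e ∈ vertEdges inc v, min 0 (b e)) = 0 :=
        Finset.sum_eq_zero fun e _ => min_eq_left zero_le
      rw [h0]; exact zero_le)
  have hstable : StableHyp inc b q x := by
    refine ⟨hx1, fun v => Or.inl ⟨hx3 v (Finset.mem_univ v), fun e _ => rfl⟩, fun e => ?_⟩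
    rcases hx4 e with h | ⟨v, _, heS, hsum, hle⟩
    · obtain ⟨v, hv⟩ := hedge e
      exact ⟨v, hv, Or.inr h⟩
    · refine ⟨v, mem_vertEdges.mp heS, Or.inl ⟨heS, hsum, ?_⟩⟩
      exact le_antisymm (Finset.le_sup heS) (Finset.sup_le hle)
  exact ⟨x, hstable, fun y hy => stable_unique_s19 hy hstable⟩
end
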